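/- arXiv:1412.6900 — 6 statements merged into one kernel-verified Lean document; each statement's English description precedes it below -/
import Mathlib

section
/- Let K be a number field with ring of integers O_K and let ρ be an element of the finite adele ring A_{K,f}. Then the closure in A_{K,f} of the orbit {a·ρ : a ∈ K*, a totally positive} equals the set of all σ ∈ A_{K,f} such that for every finite place v of K, ρ_v = 0 implies σ_v = 0. -/
open IsDedekindDomain NumberField

section helpers

open HeightOneSpectrum Multiplicative WithZero nonZeroDivisors

variable {K : Type*} [Field K] [NumberField K]

private theorem aux_exists_ofAdd_le (γ : ℤᵐ⁰) (h : γ ≠ 0) :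
    ∃ n : ℕ, (↑(ofAdd (-(n:ℤ))) : ℤᵐ⁰) ≤ γ := by
  obtain ⟨u, rfl⟩ := WithZero.ne_zero_iff_exists.mp h
  refine ⟨(-(toAdd u)).toNat, ?_⟩
  rw [WithZero.coe_le_coe, ← ofAdd_toAdd u, Multiplicative.ofAdd_le, toAdd_ofAdd]
  omega

private theorem aux_finite_val_ne_one {D : 𝓞 K} (hD : D ≠ 0) :
    {v : HeightOneSpectrum (𝓞 K) | v.intValuationDef D ≠ 1}.Finite := by
  have h := Ideal.finite_factors (I := Ideal.span {D}) (by
    rw [Ideal.zero_eq_bot, Ne, Ideal.span_singleton_eq_bot]; exact hD)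
  refine h.subset fun v hv => ?_
  rw [Set.mem_setOf_eq] at hv ⊢
  rw [← v.intValuation_lt_one_iff_dvd]
  exact lt_of_le_of_ne (v.intValuation_le_one D) hv

private theorem aux_zm0_div_le_div {a b c : ℤᵐ⁰} (h : a ≤ b) : a / c ≤ b / c := by
  rw [div_eq_mul_inv, div_eq_mul_inv]; exact mul_le_mul_left h _

private theorem aux_ofAdd_neg_le {a b : ℕ} (h : b ≤ a) :
    (↑(ofAdd (-(a:ℤ))) : ℤᵐ⁰) ≤ (↑(ofAdd (-(b:ℤ))) : ℤᵐ⁰) := by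
  rw [WithZero.coe_le_coe, Multiplicative.ofAdd_le]
  omega

private theorem aux_closedBall_mem_nhds (v : HeightOneSpectrum (𝓞 K)) (a : v.adicCompletion K)
    (ha : a ≠ 0) :
    {x : v.adicCompletion K | Valued.v x ≤ Valued.v a} ∈ nhds (0 : v.adicCompletion K) := by
  have hr : (Valued.v : Valuation (v.adicCompletion K) ℤᵐ⁰).restrict a ≠ 0 := by
    rw [Ne, Valuation.restrict_eq_zero_iff]; exact (Valuation.ne_zero_iff _).mpr ha
  have ho := Valued.isOpen_closedBall (v.adicCompletion K) hr
  have heq : {x : v.adicCompletion K | Valued.v x ≤ Valued.v a} =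
      {x | (Valued.v : Valuation (v.adicCompletion K) ℤᵐ⁰).restrict x ≤ Valued.v.restrict a} := by
    ext x; simp only [Set.mem_setOf_eq, Valuation.restrict_le_iff]
  rw [heq]
  exact ho.mem_nhds (by simp)

private theorem aux_small_mem (v : HeightOneSpectrum (𝓞 K)) (t : Set (v.adicCompletion K))
    (ht : t ∈ nhds (0 : v.adicCompletion K)) :
    ∃ n : ℕ, ∀ x : v.adicCompletion K, Valued.v x ≤ (↑(ofAdd (-(n:ℤ))) : ℤᵐ⁰) → x ∈ t := by
  obtain ⟨γ, hγ⟩ := Valued.mem_nhds_zero.mp ht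
  obtain ⟨n, hn⟩ := aux_exists_ofAdd_le _ (MonoidWithZeroHom.ValueGroup₀.embedding_unit_ne_zero γ)
  refine ⟨n + 1, fun x hx => hγ ?_⟩
  rw [Set.mem_setOf_eq, Valuation.restrict_lt_iff_lt_embedding]
  refine lt_of_lt_of_le (lt_of_le_of_lt hx ?_) hn
  rw [WithZero.coe_lt_coe, Multiplicative.ofAdd_lt]
  push_cast
  omega

private theorem aux_dense_K (v : HeightOneSpectrum (𝓞 K)) (t : v.adicCompletion K)
    (γ : ℤᵐ⁰) (hγ : γ ≠ 0) :
    ∃ b : K, Valued.v ((b : v.adicCompletion K) - t) ≤ γ := by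
  have hd : DenseRange ((↑) : K → v.adicCompletion K) := denseRange_algebraMap K v
  obtain ⟨a, ha⟩ := valuedAdicCompletion_surjective K v γ
  have ha0 : a ≠ 0 := by rintro rfl; exact hγ (by rw [← ha, map_zero])
  have hc : Filter.Tendsto (fun y : v.adicCompletion K => y - t) (nhds t) (nhds 0) := by
    exact (continuous_sub_right t).tendsto' t 0 (sub_self t)
  have hU : {y : v.adicCompletion K | Valued.v (y - t) ≤ γ} ∈ nhds t := by
    refine Filter.mem_of_superset (hc (aux_closedBall_mem_nhds v a ha0)) ?_
    intro y hy
    simp only [Set.mem_preimage, Set.mem_setOf_eq] at hy ⊢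
    rw [← ha]; exact hy
  obtain ⟨y, hy1, b, rfl⟩ := mem_closure_iff_nhds.mp (hd t) _ hU
  exact ⟨b, hy1⟩

private theorem aux_nhds_zero_iff (s : Set (FiniteAdeleRing (𝓞 K) K)) :
    s ∈ nhds (0 : FiniteAdeleRing (𝓞 K) K) ↔
      {x : (Π v : HeightOneSpectrum (𝓞 K), v.adicCompletionIntegers K) |
        (RestrictedProduct.structureMap (fun v : HeightOneSpectrum (𝓞 K) => v.adicCompletion K)
          (fun v => (v.adicCompletionIntegers K : Set (v.adicCompletion K))) Filter.cofinite x :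
            FiniteAdeleRing (𝓞 K) K) ∈ s} ∈ nhds 0 := by
  have hBopen : ∀ v : HeightOneSpectrum (𝓞 K),
      IsOpen ((v.adicCompletionIntegers K : Set (v.adicCompletion K))) :=
    fun v => Valued.isOpen_valuationSubring _
  have hN := RestrictedProduct.nhds_zero_eq_map_structureMap
    (R := fun v : HeightOneSpectrum (𝓞 K) => v.adicCompletion K)
    (B := fun v => v.adicCompletionIntegers K) hBopen
  exact (Filter.ext_iff.mp hN s).trans Filter.mem_map

private theorem aux_U_mem_nhds (r : (𝓞 K)⁰) :
    {y : FiniteAdeleRing (𝓞 K) K | ∀ v : HeightOneSpectrum (𝓞 K),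
      Valued.v (y v) ≤ v.valuation K (algebraMap (𝓞 K) K (r : 𝓞 K))} ∈
        nhds (0 : FiniteAdeleRing (𝓞 K) K) := by
  have hBopen : ∀ v : HeightOneSpectrum (𝓞 K),
      IsOpen ((v.adicCompletionIntegers K : Set (v.adicCompletion K))) :=
    fun v => Valued.isOpen_valuationSubring _
  have hr0 : (r : 𝓞 K) ≠ 0 := nonZeroDivisors.coe_ne_zero r
  have hrK : algebraMap (𝓞 K) K (r : 𝓞 K) ≠ 0 := fun h =>
    hr0 (IsFractionRing.injective (𝓞 K) K (by rw [h, map_zero]))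
  rw [aux_nhds_zero_iff]
  have hF := aux_finite_val_ne_one hr0
  have hball : ∀ v : HeightOneSpectrum (𝓞 K), {x : v.adicCompletionIntegers K |
      Valued.v (x : v.adicCompletion K) ≤ v.valuation K (algebraMap (𝓞 K) K (r : 𝓞 K))} ∈
        nhds (0 : v.adicCompletionIntegers K) := by
    intro v
    have hne : (((algebraMap (𝓞 K) K (r : 𝓞 K) : K)) : v.adicCompletion K) ≠ 0 := by
      intro h
      have := valuedAdicCompletion_eq_valuation' (R := 𝓞 K) v (algebraMap (𝓞 K) K (r : 𝓞 K))
      rw [h, map_zero] at this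
      exact hrK ((Valuation.zero_iff _).mp this.symm)
    have := aux_closedBall_mem_nhds v _ hne
    rw [valuedAdicCompletion_eq_valuation'] at this
    exact continuous_subtype_val.continuousAt.preimage_mem_nhds (x := (0 : v.adicCompletionIntegers K))
      (by rw [show ((0 : v.adicCompletionIntegers K) : v.adicCompletion K) = 0 from rfl]; exact this)
  refine Filter.mem_of_superset (set_pi_mem_nhds hF fun v _ => hball v) ?_
  intro x hx
  simp only [Set.mem_setOf_eq]
  intro v
  by_cases hv : v ∈ {v : HeightOneSpectrum (𝓞 K) | v.intValuationDef (r : 𝓞 K) ≠ 1}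
  · exact hx v hv
  · have h1 : v.valuation K (algebraMap (𝓞 K) K (r : 𝓞 K)) = 1 := by
      rw [valuation_of_algebraMap, intValuation_apply]; simpa using hv
    show Valued.v ((x v : v.adicCompletion K)) ≤ _
    rw [h1]; exact (x v).2

private theorem aux_nhds_contains_U (W : Set (FiniteAdeleRing (𝓞 K) K))
    (hW : W ∈ nhds (0 : FiniteAdeleRing (𝓞 K) K)) :
    ∃ r : (𝓞 K)⁰, {y : FiniteAdeleRing (𝓞 K) K | ∀ v : HeightOneSpectrum (𝓞 K),
      Valued.v (y v) ≤ v.valuation K (algebraMap (𝓞 K) K (r : 𝓞 K))} ⊆ W := by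
  classical
  have hBopen : ∀ v : HeightOneSpectrum (𝓞 K),
      IsOpen ((v.adicCompletionIntegers K : Set (v.adicCompletion K))) :=
    fun v => Valued.isOpen_valuationSubring _
  rw [aux_nhds_zero_iff, nhds_pi, Filter.mem_pi] at hW
  obtain ⟨I, hI, t, ht, hIt⟩ := hW
  have hn : ∀ v : HeightOneSpectrum (𝓞 K), ∃ n : ℕ, ∀ x : v.adicCompletionIntegers K,
      Valued.v (x : v.adicCompletion K) ≤ (↑(ofAdd (-(n:ℤ))) : ℤᵐ⁰) → x ∈ t v := by
    intro v
    obtain ⟨u, hu, hut⟩ := (mem_nhds_subtype _ _ _).mp (ht v)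
    obtain ⟨n, hn⟩ := aux_small_mem v u hu
    exact ⟨n, fun x hx => hut (hn x hx)⟩
  choose n hn using hn
  set J : Ideal (𝓞 K) := ∏ v ∈ hI.toFinset, v.asIdeal ^ n v with hJdef
  have hJ0 : J ≠ 0 := by
    rw [hJdef, Finset.prod_ne_zero_iff]
    intro v _
    exact pow_ne_zero _ (by rw [Ideal.zero_eq_bot]; exact v.ne_bot)
  set N : ℕ := Ideal.absNorm J with hNdef
  have hN0 : N ≠ 0 := fun h =>
    hJ0 (by rw [Ideal.zero_eq_bot]; exact Ideal.absNorm_eq_zero_iff.mp h)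
  have hNK : (N : 𝓞 K) ≠ 0 := Nat.cast_ne_zero.mpr hN0
  refine ⟨⟨(N : 𝓞 K), mem_nonZeroDivisors_of_ne_zero hNK⟩, ?_⟩
  intro y hy
  have hyint : ∀ v : HeightOneSpectrum (𝓞 K), y v ∈ v.adicCompletionIntegers K := fun v => by
    rw [mem_adicCompletionIntegers]
    exact le_trans (hy v) (by rw [valuation_of_algebraMap]; exact v.intValuation_le_one _)
  have hmem : (fun v : HeightOneSpectrum (𝓞 K) => (⟨y v, hyint v⟩ : v.adicCompletionIntegers K)) ∈ I.pi t := by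
    intro v hv
    apply hn v
    refine le_trans (hy v) ?_
    rw [valuation_of_algebraMap]
    exact (v.intValuation_le_pow_iff_mem _ _).mpr
      (Ideal.le_of_dvd (Finset.dvd_prod_of_mem _ (hI.mem_toFinset.mpr hv)) (Ideal.absNorm_mem J))
  exact hIt hmem

private theorem aux_mem_closure_iff_finiteAdele (T : Set (FiniteAdeleRing (𝓞 K) K))
    (σ : FiniteAdeleRing (𝓞 K) K) :
    σ ∈ closure T ↔ ∀ r : (𝓞 K)⁰, ∃ x ∈ T, ∀ v : HeightOneSpectrum (𝓞 K),
      Valued.v ((x - σ) v) ≤ v.valuation K (algebraMap (𝓞 K) K (r : 𝓞 K)) := by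
  constructor
  · intro h r
    have hc : Filter.Tendsto (fun y : FiniteAdeleRing (𝓞 K) K => y - σ) (nhds σ) (nhds 0) := by
      exact (continuous_sub_right σ).tendsto' σ 0 (sub_self σ)
    obtain ⟨x, hx1, hx2⟩ := mem_closure_iff_nhds.mp h _ (hc (aux_U_mem_nhds r))
    exact ⟨x, hx2, hx1⟩
  · intro h
    rw [mem_closure_iff_nhds]
    intro t ht
    have hc : Filter.Tendsto (fun y : FiniteAdeleRing (𝓞 K) K => y + σ) (nhds 0) (nhds σ) := by
      exact (continuous_add_right σ).tendsto' 0 σ (zero_add σ)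
    obtain ⟨r, hr⟩ := aux_nhds_contains_U _ (hc ht)
    obtain ⟨x, hxT, hx⟩ := h r
    exact ⟨x, by simpa using hr hx, hxT⟩

set_option maxHeartbeats 1000000 in
private theorem aux_approx (S : Finset (HeightOneSpectrum (𝓞 K))) (b : HeightOneSpectrum (𝓞 K) → K)
    (δ : HeightOneSpectrum (𝓞 K) → ℤᵐ⁰) (hδ : ∀ v ∈ S, δ v ≠ 0) :
    ∃ a : K, a ≠ 0 ∧ (∀ φ : K →+* ℝ, 0 < φ a) ∧
      (∀ v ∈ S, v.valuation K (a - b v) ≤ δ v) ∧ (∀ v ∉ S, v.valuation K a ≤ 1) := by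
  classical
  -- clear denominators
  obtain ⟨d, hd⟩ := IsLocalization.exist_integer_multiples (𝓞 K)⁰ S b
  set D : 𝓞 K := (d : 𝓞 K) * (d : 𝓞 K) with hDdef
  have hd0 : (d : 𝓞 K) ≠ 0 := nonZeroDivisors.coe_ne_zero d
  have hD0 : D ≠ 0 := mul_ne_zero hd0 hd0
  have hDK0 : algebraMap (𝓞 K) K D ≠ 0 := fun h => hD0 (IsFractionRing.injective (𝓞 K) K (by simpa using h))
  have hvD0 : ∀ v : HeightOneSpectrum (𝓞 K), v.intValuationDef D ≠ 0 :=
    fun v => v.intValuation_ne_zero D hD0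
  -- numerators
  have hx : ∀ v : HeightOneSpectrum (𝓞 K), ∃ xv : 𝓞 K,
      (v ∈ S → algebraMap (𝓞 K) K xv = algebraMap (𝓞 K) K D * b v) ∧ (v ∉ S → xv = 0) := by
    intro v
    by_cases h : v ∈ S
    · obtain ⟨c, hc⟩ := hd v h
      refine ⟨(d : 𝓞 K) * c, fun _ => ?_, fun h' => absurd h h'⟩
      rw [map_mul, hc, Algebra.smul_def, hDdef, map_mul, mul_assoc]
    · exact ⟨0, fun h' => absurd h' h, fun _ => rfl⟩
  choose x hxS hxnS using hx
  -- the finite set T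
  set T : Finset (HeightOneSpectrum (𝓞 K)) :=
    S ∪ (aux_finite_val_ne_one hD0).toFinset with hTdef
  have hST : S ⊆ T := Finset.subset_union_left
  have hvD1 : ∀ v ∉ T, v.intValuationDef D = 1 := by
    intro v hv
    by_contra h
    exact hv (Finset.mem_union_right _ ((aux_finite_val_ne_one hD0).mem_toFinset.mpr h))
  -- exponents
  have hkey : ∀ v : HeightOneSpectrum (𝓞 K), ∃ n : ℕ,
      ((↑(ofAdd (-(n:ℤ))) : ℤᵐ⁰) ≤ v.intValuationDef D) ∧
      (v ∈ S → (↑(ofAdd (-(n:ℤ))) : ℤᵐ⁰) ≤ δ v * v.intValuationDef D) := by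
    intro v
    obtain ⟨n₂, hn₂⟩ := aux_exists_ofAdd_le (v.intValuationDef D) (hvD0 v)
    by_cases h : v ∈ S
    · obtain ⟨n₁, hn₁⟩ := aux_exists_ofAdd_le (δ v * v.intValuationDef D)
        (mul_ne_zero (hδ v h) (hvD0 v))
      exact ⟨max n₁ n₂, le_trans (aux_ofAdd_neg_le (le_max_right _ _)) hn₂,
        fun _ => le_trans (aux_ofAdd_neg_le (le_max_left _ _)) hn₁⟩
    · exact ⟨n₂, hn₂, fun h' => absurd h' h⟩
  choose e he1 he2 using hkey
  -- CRT
  obtain ⟨y₀, hy₀⟩ := IsDedekindDomain.exists_forall_sub_mem_ideal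
    (s := T) (fun v => v.asIdeal) e (fun v _ => v.prime)
    (fun v _ w _ hvw => fun h => hvw (HeightOneSpectrum.ext h)) (fun v => x v)
  -- the ideal and its norm
  set I : Ideal (𝓞 K) := ∏ v ∈ T, v.asIdeal ^ e v with hIdef
  have hI0 : I ≠ 0 := by
    rw [hIdef, Finset.prod_ne_zero_iff]
    intro v _
    exact pow_ne_zero _ (by rw [Ideal.zero_eq_bot]; exact v.ne_bot)
  set N : ℕ := Ideal.absNorm I with hNdef
  have hN0 : 0 < N := Nat.pos_of_ne_zero fun h =>
    hI0 (by rw [Ideal.zero_eq_bot]; exact Ideal.absNorm_eq_zero_iff.mp h)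
  have hNmemI : (N : 𝓞 K) ∈ I := Ideal.absNorm_mem I
  have hNmem : ∀ v ∈ T, (N : 𝓞 K) ∈ v.asIdeal ^ e v := by
    intro v hv
    exact Ideal.le_of_dvd (Finset.dvd_prod_of_mem _ hv) hNmemI
  -- choose the shift
  obtain ⟨φ₀⟩ : Nonempty (K →+* ℂ) := inferInstance
  set y₀K : K := algebraMap (𝓞 K) K y₀ with hy₀K
  set B : ℝ := ‖φ₀ y₀K‖ + ∑ φ : (K →+* ℝ), |φ y₀K| with hBdef
  have hBphi : ∀ φ : (K →+* ℝ), |φ y₀K| ≤ B := by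
    intro φ
    rw [hBdef]
    have h1 : |φ y₀K| ≤ ∑ ψ : (K →+* ℝ), |ψ y₀K| :=
      Finset.single_le_sum (f := fun ψ : (K →+* ℝ) => |ψ y₀K|)
        (fun _ _ => abs_nonneg _) (Finset.mem_univ φ)
    have h2 : (0:ℝ) ≤ ‖φ₀ y₀K‖ := norm_nonneg _
    linarith
  have hBnorm : ‖φ₀ y₀K‖ ≤ B := by
    rw [hBdef]
    have : (0:ℝ) ≤ ∑ ψ : (K →+* ℝ), |ψ y₀K| :=
      Finset.sum_nonneg fun _ _ => abs_nonneg _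
    linarith
  obtain ⟨m, hm⟩ := exists_nat_gt B
  have hmN : B < ((m * N : ℕ) : ℝ) := by
    have hN1 : (1:ℝ) ≤ (N:ℝ) := by exact_mod_cast hN0
    have hm0 : (0:ℝ) ≤ (m:ℝ) := Nat.cast_nonneg m
    have h1 : (m : ℝ) ≤ ((m * N : ℕ) : ℝ) := by push_cast; nlinarith
    linarith
  set y : 𝓞 K := y₀ + ((m * N : ℕ) : 𝓞 K) with hydef
  set yK : K := algebraMap (𝓞 K) K y with hyK
  have hyKeq : yK = y₀K + ((m * N : ℕ) : K) := by
    rw [hyK, hydef, map_add, map_natCast, hy₀K]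
  -- y satisfies the congruences
  have hycong : ∀ v ∈ T, y - x v ∈ v.asIdeal ^ e v := by
    intro v hv
    have : y - x v = (y₀ - x v) + ((m * N : ℕ) : 𝓞 K) := by ring
    rw [this]
    refine Ideal.add_mem _ (hy₀ v hv) ?_
    have : ((m * N : ℕ) : 𝓞 K) = (m : 𝓞 K) * (N : 𝓞 K) := by push_cast; ring
    rw [this]
    exact Ideal.mul_mem_left _ _ (hNmem v hv)
  -- y is nonzero
  have hyK0 : yK ≠ 0 := by
    intro h
    rw [hyKeq] at h
    have h0 : φ₀ (y₀K + ((m * N : ℕ) : K)) = 0 := by rw [h, map_zero]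
    rw [map_add, map_natCast] at h0
    have this := h0
    have h2 : φ₀ y₀K = -((m * N : ℕ) : ℂ) := by linear_combination this
    have h3 : ‖φ₀ y₀K‖ = ((m * N : ℕ) : ℝ) := by
      rw [h2]
      simp
    linarith [lt_of_le_of_lt hBnorm hmN]
  -- positivity
  have hypos : ∀ φ : K →+* ℝ, 0 < φ yK := by
    intro φ
    rw [hyKeq, map_add, map_natCast]
    have h1 : -B ≤ φ y₀K := by
      have := hBphi φ
      have := neg_abs_le (φ y₀K)
      linarith
    linarith
  -- define a
  refine ⟨yK / algebraMap (𝓞 K) K D, div_ne_zero hyK0 hDK0, ?_, ?_, ?_⟩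
  · intro φ
    rw [map_div₀]
    have hdK0 : algebraMap (𝓞 K) K (d : 𝓞 K) ≠ 0 := fun h =>
      hd0 (IsFractionRing.injective (𝓞 K) K (by rw [h, map_zero]))
    have hdK0' : φ (algebraMap (𝓞 K) K (d : 𝓞 K)) ≠ 0 := fun h =>
      hdK0 (φ.injective (by rw [h, map_zero]))
    have hDpos : 0 < φ (algebraMap (𝓞 K) K D) := by
      rw [hDdef, map_mul, map_mul]
      exact mul_self_pos.mpr hdK0'
    exact div_pos (hypos φ) hDpos
  · -- approximation on S
    intro v hv
    have hbv : algebraMap (𝓞 K) K (x v) = algebraMap (𝓞 K) K D * b v := hxS v hv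
    have key : algebraMap (𝓞 K) K (y - x v) / algebraMap (𝓞 K) K D
        = yK / algebraMap (𝓞 K) K D - b v := by
      rw [map_sub, hbv, sub_div, mul_div_cancel_left₀ _ hDK0]
    rw [← key, map_div₀, valuation_of_algebraMap, valuation_of_algebraMap,
      intValuation_apply, intValuation_apply]
    have h1 : v.intValuationDef (y - x v) ≤ (↑(ofAdd (-(e v : ℤ))) : ℤᵐ⁰) := by
      show v.intValuation (y - x v) ≤ WithZero.exp (-(e v : ℤ))
      rw [v.intValuation_le_pow_iff_dvd, Ideal.dvd_span_singleton]
      exact hycong v (hST hv)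
    calc v.intValuationDef (y - x v) / v.intValuationDef D
        ≤ (↑(ofAdd (-(e v : ℤ))) : ℤᵐ⁰) / v.intValuationDef D := aux_zm0_div_le_div h1
      _ ≤ (δ v * v.intValuationDef D) / v.intValuationDef D := aux_zm0_div_le_div (he2 v hv)
      _ = δ v := by
          rw [mul_div_assoc, div_self (hvD0 v), mul_one]
  · -- integrality outside S
    intro v hv
    rw [map_div₀, valuation_of_algebraMap, valuation_of_algebraMap,
      intValuation_apply, intValuation_apply]
    by_cases hvT : v ∈ T
    · have hxv0 : x v = 0 := hxnS v hv
      have h1 : v.intValuationDef y ≤ (↑(ofAdd (-(e v : ℤ))) : ℤᵐ⁰) := by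
        show v.intValuation y ≤ WithZero.exp (-(e v : ℤ))
        rw [v.intValuation_le_pow_iff_dvd, Ideal.dvd_span_singleton]
        have := hycong v hvT
        rwa [hxv0, sub_zero] at this
      have h2 : v.intValuationDef y ≤ v.intValuationDef D := le_trans h1 (he1 v)
      calc v.intValuationDef y / v.intValuationDef D
          ≤ v.intValuationDef D / v.intValuationDef D := aux_zm0_div_le_div h2
        _ = 1 := div_self (hvD0 v)
    · rw [hvD1 v hvT, div_one]
      exact v.intValuation_le_one y

private theorem aux_fwd (K : Type*) [Field K] [NumberField K] (ρ : FiniteAdeleRing (𝓞 K) K) :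
    closure {x : FiniteAdeleRing (𝓞 K) K |
        ∃ a : K, a ≠ 0 ∧ (∀ φ : K →+* ℝ, 0 < φ a) ∧
          x = algebraMap K (FiniteAdeleRing (𝓞 K) K) a * ρ} ⊆
      {σ : FiniteAdeleRing (𝓞 K) K |
        ∀ v : HeightOneSpectrum (𝓞 K), ρ v = 0 → σ v = 0} := by
  intro σ hσ v₀ hρv₀
  by_contra hσv₀
  rw [aux_mem_closure_iff_finiteAdele] at hσ
  have hval : Valued.v (σ v₀) ≠ 0 := (Valuation.ne_zero_iff _).mpr hσv₀
  obtain ⟨u, hu⟩ := WithZero.ne_zero_iff_exists.mp hval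
  -- pick a uniformizer power
  obtain ⟨π, hπ⟩ := v₀.intValuation_exists_uniformizer
  have hπ0 : π ≠ 0 := by
    intro h
    rw [h, map_zero] at hπ
    exact zero_ne_coe hπ
  set n : ℕ := (-(toAdd u)).toNat + 1 with hn
  have hr0 : π ^ n ≠ 0 := pow_ne_zero n hπ0
  have hrval : v₀.valuation K (algebraMap (𝓞 K) K (π ^ n)) = (↑(ofAdd (-(n:ℤ))) : ℤᵐ⁰) := by
    rw [valuation_of_algebraMap, map_pow, hπ]
    show WithZero.exp (-1) ^ n = WithZero.exp (-(n:ℤ))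
    rw [← WithZero.exp_nsmul]
    congr 1
    simp
  obtain ⟨x, ⟨a, _, _, hxa⟩, hx⟩ := hσ ⟨π ^ n, mem_nonZeroDivisors_of_ne_zero hr0⟩
  have hxv₀ : x v₀ = 0 := by
    rw [hxa]
    show (algebraMap K (FiniteAdeleRing (𝓞 K) K) a) v₀ * ρ v₀ = 0
    rw [hρv₀, mul_zero]
  have h2 := hx v₀
  rw [hrval] at h2
  have h3 : (x - σ) v₀ = - σ v₀ := by
    show x v₀ - σ v₀ = - σ v₀
    rw [hxv₀, zero_sub]
  rw [h3, Valuation.map_neg, ← hu] at h2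
  rw [WithZero.coe_le_coe] at h2
  have h2' : toAdd u ≤ -(n:ℤ) := h2
  omega


private theorem aux_rev (K : Type*) [Field K] [NumberField K] (ρ : FiniteAdeleRing (𝓞 K) K) :
    {σ : FiniteAdeleRing (𝓞 K) K |
        ∀ v : HeightOneSpectrum (𝓞 K), ρ v = 0 → σ v = 0} ⊆
    closure {x : FiniteAdeleRing (𝓞 K) K |
        ∃ a : K, a ≠ 0 ∧ (∀ φ : K →+* ℝ, 0 < φ a) ∧
          x = algebraMap K (FiniteAdeleRing (𝓞 K) K) a * ρ} := by
  classical
  intro σ hσ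
  rw [aux_mem_closure_iff_finiteAdele]
  intro r
  have hr0 : (r : 𝓞 K) ≠ 0 := nonZeroDivisors.coe_ne_zero r
  have hrK0 : algebraMap (𝓞 K) K (r : 𝓞 K) ≠ 0 := fun h =>
    hr0 (IsFractionRing.injective (𝓞 K) K (by rw [h, map_zero]))
  -- the finite set S
  have hρfin : {v : HeightOneSpectrum (𝓞 K) | ρ v ∉ v.adicCompletionIntegers K}.Finite := by
    have := ρ.2
    rwa [Filter.eventually_cofinite] at this
  have hσfin : {v : HeightOneSpectrum (𝓞 K) | σ v ∉ v.adicCompletionIntegers K}.Finite := by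
    have := σ.2
    rwa [Filter.eventually_cofinite] at this
  set S : Finset (HeightOneSpectrum (𝓞 K)) :=
    hρfin.toFinset ∪ hσfin.toFinset ∪ (aux_finite_val_ne_one hr0).toFinset with hSdef
  -- targets and radii
  set δ : HeightOneSpectrum (𝓞 K) → ℤᵐ⁰ := fun v =>
    if ρ v = 0 then 1 else
      v.valuation K (algebraMap (𝓞 K) K (r : 𝓞 K)) * (Valued.v (ρ v))⁻¹ with hδdef
  have hδ0 : ∀ v : HeightOneSpectrum (𝓞 K), δ v ≠ 0 := by
    intro v
    simp only [hδdef]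
    by_cases h : ρ v = 0
    · rw [if_pos h]; exact one_ne_zero
    · rw [if_neg h]
      refine mul_ne_zero ?_ (inv_ne_zero ((Valuation.ne_zero_iff _).mpr h))
      rw [Valuation.ne_zero_iff]
      exact hrK0
  have hbex : ∀ v : HeightOneSpectrum (𝓞 K), ∃ bv : K, ρ v ≠ 0 →
      Valued.v ((bv : v.adicCompletion K) - σ v * (ρ v)⁻¹) ≤ δ v := by
    intro v
    by_cases h : ρ v = 0
    · exact ⟨0, fun h' => absurd h h'⟩
    · obtain ⟨bv, hbv⟩ := aux_dense_K v (σ v * (ρ v)⁻¹) (δ v) (hδ0 v)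
      exact ⟨bv, fun _ => hbv⟩
  choose b hb using hbex
  obtain ⟨a, ha0, hapos, haS, hanS⟩ := aux_approx S b δ (fun v _ => hδ0 v)
  refine ⟨algebraMap K (FiniteAdeleRing (𝓞 K) K) a * ρ, ⟨a, ha0, hapos, rfl⟩, ?_⟩
  intro v
  have hcomp : ((algebraMap K (FiniteAdeleRing (𝓞 K) K) a * ρ - σ) v)
      = (a : v.adicCompletion K) * ρ v - σ v := rfl
  rw [hcomp]
  have hcoeval : ∀ k : K, Valued.v ((k : v.adicCompletion K)) = v.valuation K k := fun k =>
    valuedAdicCompletion_eq_valuation' v k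
  by_cases hρv : ρ v = 0
  · rw [hρv, mul_zero, hσ v hρv, sub_zero, map_zero]
    exact zero_le'
  · -- main case
    have hρval : Valued.v (ρ v) ≠ 0 := (Valuation.ne_zero_iff _).mpr hρv
    have hfact : (a : v.adicCompletion K) * ρ v - σ v
        = ((a : v.adicCompletion K) - σ v * (ρ v)⁻¹) * ρ v := by
      field_simp
    rw [hfact, map_mul]
    have htri : Valued.v ((a : v.adicCompletion K) - σ v * (ρ v)⁻¹)
        ≤ max (Valued.v ((a : v.adicCompletion K) - (b v : v.adicCompletion K)))
            (Valued.v ((b v : v.adicCompletion K) - σ v * (ρ v)⁻¹)) := by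
      have : (a : v.adicCompletion K) - σ v * (ρ v)⁻¹
          = ((a : v.adicCompletion K) - (b v : v.adicCompletion K))
            + ((b v : v.adicCompletion K) - σ v * (ρ v)⁻¹) := by ring
      rw [this]
      exact Valuation.map_add _ _ _
    have hab : Valued.v ((a : v.adicCompletion K) - (b v : v.adicCompletion K))
        = v.valuation K (a - b v) := by
      rw [← hcoeval (a - b v)]
      congr 1
      exact (map_sub (algebraMap K (v.adicCompletion K)) a (b v)).symm
    by_cases hvS : v ∈ S
    · have h1 : Valued.v ((a : v.adicCompletion K) - σ v * (ρ v)⁻¹) ≤ δ v :=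
        le_trans htri (max_le (by rw [hab]; exact haS v hvS) (hb v hρv))
      calc Valued.v ((a : v.adicCompletion K) - σ v * (ρ v)⁻¹) * Valued.v (ρ v)
          ≤ δ v * Valued.v (ρ v) := mul_le_mul_left h1 _
        _ = v.valuation K (algebraMap (𝓞 K) K (r : 𝓞 K)) := by
            simp only [hδdef, if_neg hρv]
            rw [mul_assoc, inv_mul_cancel₀ hρval, mul_one]
    · -- v outside S : everything integral
      have hvρ : Valued.v (ρ v) ≤ 1 := by
        by_contra h
        exact hvS (Finset.mem_union_left _ (Finset.mem_union_left _
          (hρfin.mem_toFinset.mpr ((notMem_adicCompletionIntegers _ _ _).mpr (not_le.mp h)))))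
      have hvσ : Valued.v (σ v) ≤ 1 := by
        by_contra h
        exact hvS (Finset.mem_union_left _ (Finset.mem_union_right _
          (hσfin.mem_toFinset.mpr ((notMem_adicCompletionIntegers _ _ _).mpr (not_le.mp h)))))
      have hvr : v.valuation K (algebraMap (𝓞 K) K (r : 𝓞 K)) = 1 := by
        rw [valuation_of_algebraMap, intValuation_apply]
        by_contra h
        exact hvS (Finset.mem_union_right _ ((aux_finite_val_ne_one hr0).mem_toFinset.mpr h))
      rw [← map_mul, ← hfact, hvr]
      have hva : Valued.v ((a : v.adicCompletion K)) ≤ 1 := by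
        rw [hcoeval]; exact hanS v hvS
      calc Valued.v ((a : v.adicCompletion K) * ρ v - σ v)
          ≤ max (Valued.v ((a : v.adicCompletion K) * ρ v)) (Valued.v (σ v)) :=
            Valuation.map_sub _ _ _
        _ ≤ 1 := by
            rw [map_mul]
            exact max_le (mul_le_one' hva hvρ) hvσ

end helpers

/-- For a number field `K` and `ρ` in the finite adele ring of `K`, the closure
of the orbit `{a • ρ : a ∈ K*₊}` of `ρ` under multiplication by nonzero totally positive elements
of `K` equals the set of finite adeles `σ` such that `σ_v = 0` whenever `ρ_v = 0`. -/
theorem closure_totallyPositive_orbit_finiteAdele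
    (K : Type*) [Field K] [NumberField K] (ρ : FiniteAdeleRing (𝓞 K) K) :
    closure {x : FiniteAdeleRing (𝓞 K) K |
        ∃ a : K, a ≠ 0 ∧ (∀ φ : K →+* ℝ, 0 < φ a) ∧
          x = algebraMap K (FiniteAdeleRing (𝓞 K) K) a * ρ} =
      {σ : FiniteAdeleRing (𝓞 K) K |
        ∀ v : HeightOneSpectrum (𝓞 K), ρ v = 0 → σ v = 0} := by
  exact Set.Subset.antisymm (aux_fwd K ρ) (aux_rev K ρ)
end

section
/- Let K be a number field with ring of integers O_K, let 𝔪 be a nonzero ideal of O_K, and let I be a nonzero fractional ideal of O_K. Then there exist a totally positive element a ∈ K* and nonzero integral ideals 𝔞 and 𝔟 of O_K, each coprime to 𝔪 (i.e., 𝔞 + 𝔪 = O_K and 𝔟 + 𝔪 = O_K), such that I = (aO_K) · 𝔞 · 𝔟^{-1} as fractional ideals. -/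
open NumberField nonZeroDivisors

open UniqueFactorizationMonoid in
/-- Auxiliary lemma: in a Dedekind domain, given nonzero ideals `J` and `m`, there is
`c ∈ J` such that every `c'` congruent to `c` modulo `J * m` lies in `J` and satisfies
`span {c'} ⊔ J * m = J`. -/
theorem aux_exists_good_rep {R : Type*} [CommRing R] [IsDomain R] [IsDedekindDomain R]
    (J m : Ideal R) (hJ : J ≠ 0) (hm : m ≠ 0) :
    ∃ c ∈ J, ∀ c', c' - c ∈ J * m → c' ∈ J ∧ Ideal.span {c'} ⊔ J * m = J := by
  classical
  have hJm : J * m ≠ 0 := mul_ne_zero hJ hm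
  set S : Finset (Ideal R) := (normalizedFactors (J * m)).toFinset with hS
  have hSprime : ∀ 𝔭 ∈ S, Prime 𝔭 := fun 𝔭 h𝔭 =>
    prime_of_normalized_factor 𝔭 (Multiset.mem_toFinset.mp h𝔭)
  set n : Ideal R → ℕ := fun 𝔭 => (normalizedFactors J).count 𝔭 with hn
  have hpowdvd : ∀ 𝔭 : Ideal R, Prime 𝔭 → 𝔭 ^ n 𝔭 ∣ J := by
    intro 𝔭 h𝔭
    rw [dvd_iff_normalizedFactors_le_normalizedFactors (pow_ne_zero _ h𝔭.ne_zero) hJ,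
      normalizedFactors_pow, normalizedFactors_irreducible h𝔭.irreducible, normalize_eq,
      Multiset.nsmul_singleton]
    exact Multiset.le_count_iff_replicate_le.mp le_rfl
  have hx : ∀ 𝔭 ∈ S, ∃ y, y ∈ 𝔭 ^ n 𝔭 ∧ y ∉ 𝔭 ^ (n 𝔭 + 1) := by
    intro 𝔭 h𝔭
    refine Ideal.exists_mem_pow_notMem_pow_succ 𝔭 ?_ ?_ (n 𝔭)
    · simpa using (hSprime 𝔭 h𝔭).ne_zero
    · exact fun h' => (hSprime 𝔭 h𝔭).not_isUnit (Ideal.isUnit_iff.mpr h')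
  choose! x hx1 hx2 using hx
  obtain ⟨c, hc⟩ := IsDedekindDomain.exists_forall_sub_mem_ideal (s := S)
    (fun 𝔭 => 𝔭) (fun 𝔭 => n 𝔭 + 1) hSprime (fun i _ j _ hij => hij)
    (fun 𝔭 => x (𝔭 : Ideal R))
  have hcmem : ∀ 𝔭 ∈ S, c ∈ 𝔭 ^ n 𝔭 := by
    intro 𝔭 h𝔭
    have h1 : c = (c - x 𝔭) + x 𝔭 := by ring
    rw [h1]
    exact add_mem (Ideal.pow_le_pow_right (Nat.le_succ _) (hc 𝔭 h𝔭)) (hx1 𝔭 h𝔭)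
  have hcnot : ∀ 𝔭 ∈ S, c ∉ 𝔭 ^ (n 𝔭 + 1) := by
    intro 𝔭 h𝔭 hmem
    exact hx2 𝔭 h𝔭 (by simpa using sub_mem hmem (hc 𝔭 h𝔭))
  have hsubset : (normalizedFactors J).toFinset ⊆ S := by
    intro 𝔭 h𝔭
    rw [Multiset.mem_toFinset] at h𝔭 ⊢
    exact Multiset.subset_of_le
      ((dvd_iff_normalizedFactors_le_normalizedFactors hJ hJm).mp ⟨m, rfl⟩) h𝔭
  have hcJ : c ∈ J := by
    rw [← Ideal.span_singleton_le_iff_mem, ← Ideal.dvd_iff_le]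
    have hfac : J = ∏ 𝔭 ∈ (normalizedFactors J).toFinset, 𝔭 ^ (normalizedFactors J).count 𝔭 := by
      conv_lhs => rw [← associated_iff_eq.mp (prod_normalizedFactors hJ)]
      exact Finset.prod_multiset_count _
    rw [hfac]
    refine Finset.prod_dvd_of_coprime ?_ ?_
    · intro 𝔭 h𝔭 𝔮 h𝔮 hne
      have h𝔭p := hSprime 𝔭 (hsubset h𝔭)
      have h𝔮p := hSprime 𝔮 (hsubset h𝔮)
      have h𝔭max : Ideal.IsMaximal 𝔭 :=
        (Ideal.isPrime_of_prime h𝔭p).isMaximal (by simpa using h𝔭p.ne_zero)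
      have h𝔮max : Ideal.IsMaximal 𝔮 :=
        (Ideal.isPrime_of_prime h𝔮p).isMaximal (by simpa using h𝔮p.ne_zero)
      exact (Ideal.isCoprime_iff_sup_eq.mpr (h𝔭max.coprime_of_ne h𝔮max hne)).pow
    · intro 𝔭 h𝔭
      rw [Ideal.dvd_span_singleton]
      exact hcmem 𝔭 (hsubset h𝔭)
  refine ⟨c, hcJ, fun c' hc' => ?_⟩
  have hc'J : c' ∈ J := by
    have h1 : c' = (c' - c) + c := by ring
    rw [h1]
    exact add_mem (Ideal.mul_le_left hc') hcJ
  refine ⟨hc'J, ?_⟩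
  have hle : Ideal.span {c'} ⊔ J * m ≤ J :=
    sup_le ((Ideal.span_singleton_le_iff_mem _).mpr hc'J) Ideal.mul_le_left
  refine le_antisymm hle ?_
  obtain ⟨𝔟, h𝔟⟩ : J ∣ Ideal.span {c'} ⊔ J * m := Ideal.dvd_iff_le.mpr hle
  suffices h𝔟top : 𝔟 = ⊤ by rw [h𝔟, h𝔟top, Ideal.mul_top]
  by_contra h
  obtain ⟨𝔭₀, h𝔭₀max, h𝔟le⟩ := Ideal.exists_le_maximal 𝔟 h
  have hm𝔭₀ : m ≤ 𝔭₀ := by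
    have h1 : J * m ≤ J * 𝔭₀ := by
      calc J * m ≤ Ideal.span {c'} ⊔ J * m := le_sup_right
        _ = J * 𝔟 := h𝔟
        _ ≤ J * 𝔭₀ := Ideal.mul_mono_right h𝔟le
    have h2 : J * 𝔭₀ ∣ J * m := Ideal.dvd_iff_le.mpr h1
    exact Ideal.dvd_iff_le.mp ((mul_dvd_mul_iff_left hJ).mp h2)
  have h𝔭₀bot : 𝔭₀ ≠ ⊥ := by
    rintro rfl
    exact hm (le_bot_iff.mp hm𝔭₀)
  have h𝔭₀prime : Prime 𝔭₀ := Ideal.prime_of_isPrime h𝔭₀bot h𝔭₀max.isPrime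
  have h𝔭₀S : 𝔭₀ ∈ S := by
    obtain ⟨q, hq, hassoc⟩ := exists_mem_normalizedFactors_of_dvd hJm h𝔭₀prime.irreducible
      (dvd_mul_of_dvd_right (Ideal.dvd_iff_le.mpr hm𝔭₀) J)
    rw [hS, Multiset.mem_toFinset]
    rwa [associated_iff_eq.mp hassoc]
  have hJle : J ≤ 𝔭₀ ^ n 𝔭₀ := Ideal.dvd_iff_le.mp (hpowdvd 𝔭₀ h𝔭₀prime)
  have hc'mem : c' ∈ 𝔭₀ ^ (n 𝔭₀ + 1) := by
    have h2 : Ideal.span {c'} ⊔ J * m ≤ 𝔭₀ ^ (n 𝔭₀ + 1) := by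
      rw [h𝔟, pow_succ]
      exact Ideal.mul_mono hJle h𝔟le
    exact h2 (le_sup_left (a := Ideal.span {c'}) (Ideal.mem_span_singleton_self c'))
  have hcmem' : c ∈ 𝔭₀ ^ (n 𝔭₀ + 1) := by
    have h3 : J * m ≤ 𝔭₀ ^ (n 𝔭₀ + 1) := by
      rw [pow_succ]
      exact Ideal.mul_mono hJle hm𝔭₀
    simpa using sub_mem hc'mem (h3 hc')
  exact hcnot 𝔭₀ h𝔭₀S hcmem'

set_option maxHeartbeats 1000000 in
/-- For a number field `K`, a nonzero ideal `𝔪` of `𝓞 K` and a nonzero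
fractional ideal `I` of `𝓞 K`, there are a nonzero totally positive `a ∈ K` and nonzero
integral ideals `𝔞, 𝔟`, both coprime to `𝔪`, with `I = (a) 𝔞 𝔟⁻¹`. -/
theorem exists_totallyPositive_coprime_factorization
    (K : Type*) [Field K] [NumberField K] (𝔪 : Ideal (𝓞 K)) (h𝔪 : 𝔪 ≠ 0)
    (I : FractionalIdeal (𝓞 K)⁰ K) (hI : I ≠ 0) :
    ∃ (a : K) (𝔞 𝔟 : Ideal (𝓞 K)), a ≠ 0 ∧ (∀ φ : K →+* ℝ, 0 < φ a) ∧
      𝔞 ≠ 0 ∧ 𝔟 ≠ 0 ∧ 𝔞 + 𝔪 = ⊤ ∧ 𝔟 + 𝔪 = ⊤ ∧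
      I = FractionalIdeal.spanSingleton (𝓞 K)⁰ a * (𝔞 : FractionalIdeal (𝓞 K)⁰ K) *
        (𝔟 : FractionalIdeal (𝓞 K)⁰ K)⁻¹ := by
  classical
  obtain ⟨d, J, hd, hIJ⟩ := FractionalIdeal.exists_eq_spanSingleton_mul I
  have hJ : J ≠ 0 := by
    rintro rfl
    apply hI
    rw [hIJ]
    simp
  obtain ⟨c, hcJ, hkey⟩ := aux_exists_good_rep J 𝔪 hJ h𝔪
  set ψ : 𝓞 K →+* K := algebraMap (𝓞 K) K with hψ
  have hψinj : Function.Injective ψ := IsFractionRing.injective (𝓞 K) K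
  have hdK : ψ d ≠ 0 := fun h => hd (hψinj (by simpa using h))
  -- a positive integer in J * 𝔪
  set N : ℕ := (J * 𝔪).absNorm with hN
  have hNmem : ((N : ℕ) : 𝓞 K) ∈ J * 𝔪 := Ideal.absNorm_mem _
  have hNne : N ≠ 0 := by
    intro h
    exact mul_ne_zero hJ h𝔪 (Ideal.absNorm_eq_zero_iff.mp h)
  have hNpos : (0 : ℝ) < N := by positivity
  -- choose the shift k
  obtain ⟨M, hM⟩ : ∃ M : ℝ, ∀ φ : K →+* ℝ, |φ (ψ c)| / ((N : ℝ) * |φ (ψ d)|) ≤ M := by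
    obtain ⟨M, hM⟩ :=
      (Set.finite_range fun φ : K →+* ℝ => |φ (ψ c)| / ((N : ℝ) * |φ (ψ d)|)).bddAbove
    exact ⟨M, fun φ => hM ⟨φ, rfl⟩⟩
  obtain ⟨φ₀⟩ : Nonempty (K →+* ℂ) := inferInstance
  obtain ⟨k, hk⟩ := exists_nat_gt (max M (‖φ₀ (ψ c)‖ / ((N : ℝ) * ‖φ₀ (ψ d)‖)))
  set c' : 𝓞 K := c + ((k * N : ℕ) : 𝓞 K) * d with hc'def
  have hc'coset : c' - c ∈ J * 𝔪 := by
    have h1 : ((k * N : ℕ) : 𝓞 K) * d = (k : 𝓞 K) * ((((N : ℕ) : 𝓞 K)) * d) := by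
      push_cast
      ring
    rw [hc'def, add_sub_cancel_left, h1]
    exact Ideal.mul_mem_left _ _ (Ideal.mul_mem_right d _ hNmem)
  obtain ⟨hc'J, hc'sup⟩ := hkey c' hc'coset
  -- norms of embeddings of `d` are positive
  have hd0C : (0 : ℝ) < ‖φ₀ (ψ d)‖ := by
    simpa using (map_ne_zero φ₀).mpr hdK
  -- `c'` is nonzero
  have hc'0 : c' ≠ 0 := by
    intro h0
    have hmap : φ₀ (ψ c') = φ₀ (ψ c) + ((k * N : ℕ) : ℂ) * φ₀ (ψ d) := by
      rw [hc'def]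
      push_cast
      simp [map_add, map_mul]
    rw [h0] at hmap
    simp only [map_zero] at hmap
    have hnorm : ‖φ₀ (ψ c)‖ = (k * N : ℝ) * ‖φ₀ (ψ d)‖ := by
      have : φ₀ (ψ c) = -(((k * N : ℕ) : ℂ) * φ₀ (ψ d)) := by linear_combination -hmap
      rw [this, norm_neg, norm_mul]
      push_cast
      simp
    have hklt : ‖φ₀ (ψ c)‖ / ((N : ℝ) * ‖φ₀ (ψ d)‖) < k :=
      lt_of_le_of_lt (le_max_right _ _) hk
    rw [div_lt_iff₀ (mul_pos hNpos hd0C)] at hklt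
    push_cast at hnorm
    nlinarith
  have hc'K : ψ c' ≠ 0 := fun h => hc'0 (hψinj (by simpa using h))
  -- totally positive
  set a : K := ψ c' / ψ d with ha
  have ha0 : a ≠ 0 := div_ne_zero hc'K hdK
  have hapos : ∀ φ : K →+* ℝ, 0 < φ a := by
    intro φ
    have hvd : φ (ψ d) ≠ 0 := (map_ne_zero φ).mpr (fun h => hd (hψinj (by simpa using h)))
    have hmap : φ (ψ c') = φ (ψ c) + ((k * N : ℕ) : ℝ) * φ (ψ d) := by
      rw [hc'def]
      push_cast
      simp [map_add, map_mul]
    have hklt : |φ (ψ c)| / ((N : ℝ) * |φ (ψ d)|) < k :=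
      lt_of_le_of_lt (le_trans (hM φ) (le_max_left _ _)) hk
    have habs : (0 : ℝ) < |φ (ψ d)| := abs_pos.mpr hvd
    rw [div_lt_iff₀ (mul_pos hNpos habs)] at hklt
    have hb : |φ (ψ c)| < (k * N : ℝ) * |φ (ψ d)| := by
      calc |φ (ψ c)| < k * ((N : ℝ) * |φ (ψ d)|) := hklt
        _ = (k * N : ℝ) * |φ (ψ d)| := by ring
    rw [ha, map_div₀, hmap]
    push_cast
    rcases hvd.lt_or_gt with hneg | hpos
    · apply div_pos_of_neg_of_neg _ hneg
      have h1 : φ (ψ c) ≤ |φ (ψ c)| := le_abs_self _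
      have h2 : |φ (ψ d)| = -φ (ψ d) := abs_of_neg hneg
      have h4 : (k : ℝ) * (N : ℝ) * φ (ψ d) = -((k : ℝ) * (N : ℝ) * |φ (ψ d)|) := by
        rw [h2]; ring
      linarith [hb, h1]
    · apply div_pos _ hpos
      have h1 : -|φ (ψ c)| ≤ φ (ψ c) := neg_abs_le _
      have h2 : |φ (ψ d)| = φ (ψ d) := abs_of_pos hpos
      have h4 : (k : ℝ) * (N : ℝ) * φ (ψ d) = (k : ℝ) * (N : ℝ) * |φ (ψ d)| := by rw [h2]
      linarith [hb, h1]
  -- the ideal 𝔟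
  obtain ⟨𝔟, h𝔟⟩ : J ∣ Ideal.span {c'} :=
    Ideal.dvd_iff_le.mpr ((Ideal.span_singleton_le_iff_mem _).mpr hc'J)
  have h𝔟0 : 𝔟 ≠ 0 := by
    rintro rfl
    rw [mul_zero] at h𝔟
    exact hc'0 (by simpa [Ideal.span_singleton_eq_bot] using h𝔟)
  have h𝔟cop : 𝔟 + 𝔪 = ⊤ := by
    by_contra hne
    obtain ⟨𝔭, h𝔭max, hle⟩ := Ideal.exists_le_maximal _ hne
    rw [Submodule.add_eq_sup, sup_le_iff] at hle
    have h1 : J ≤ J * 𝔭 := by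
      conv_lhs => rw [← hc'sup]
      refine sup_le ?_ (Ideal.mul_mono_right hle.2)
      calc Ideal.span {c'} = J * 𝔟 := h𝔟
        _ ≤ J * 𝔭 := Ideal.mul_mono_right hle.1
    have h2 : J * 𝔭 ∣ J * ⊤ := by
      rw [Ideal.mul_top]
      exact Ideal.dvd_iff_le.mpr h1
    have h3 : 𝔭 = ⊤ := eq_top_iff.mpr (Ideal.dvd_iff_le.mp ((mul_dvd_mul_iff_left hJ).mp h2))
    exact h𝔭max.ne_top h3
  -- the fractional ideal identity
  have hb : (𝔟 : FractionalIdeal (𝓞 K)⁰ K) ≠ 0 := FractionalIdeal.coeIdeal_ne_zero.mpr h𝔟0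
  refine ⟨a, ⊤, 𝔟, ha0, hapos, ?_, h𝔟0, ?_, h𝔟cop, ?_⟩
  · simp [Ideal.zero_eq_bot]
  · simp [Submodule.add_eq_sup]
  · have hss : FractionalIdeal.spanSingleton (𝓞 K)⁰ (ψ c') =
        (J : FractionalIdeal (𝓞 K)⁰ K) * (𝔟 : FractionalIdeal (𝓞 K)⁰ K) := by
      rw [← FractionalIdeal.coeIdeal_span_singleton, h𝔟, FractionalIdeal.coeIdeal_mul]
    rw [hIJ, FractionalIdeal.coeIdeal_top, mul_one, ha, div_eq_mul_inv,
      ← FractionalIdeal.spanSingleton_mul_spanSingleton, hss]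
    rw [mul_right_comm (J : FractionalIdeal (𝓞 K)⁰ K) (𝔟 : FractionalIdeal (𝓞 K)⁰ K),
      mul_assoc, mul_inv_cancel₀ hb, mul_one, mul_comm]
end

section
/- Let K be a number field of degree n over ℚ and let p be a rational prime such that pO_K is not a prime ideal of O_K. Then there exists a nonzero totally positive element a ∈ K* with 1 ≤ v_p(N_{K/ℚ}(a)) < n. -/
open NumberField

set_option maxHeartbeats 1000000
set_option synthInstance.maxHeartbeats 400000

/-- If a rational prime `p` splits (i.e. `p 𝓞_K` is not prime) in a number
field `K` of degree `n`, then there is a nonzero totally positive `a ∈ K` with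
`1 ≤ v_p(N_{K/ℚ}(a)) < n`. -/
theorem exists_totallyPositive_padicValRat_norm_lt_of_split
    (K : Type*) [Field K] [NumberField K] (n : ℕ) (hn : n = Module.finrank ℚ K)
    (p : ℕ) (hp : p.Prime) (hsplit : ¬ (Ideal.span {(p : 𝓞 K)}).IsPrime) :
    ∃ a : K, a ≠ 0 ∧ (∀ φ : K →+* ℝ, 0 < φ a) ∧
      1 ≤ padicValRat p (Algebra.norm ℚ a) ∧ padicValRat p (Algebra.norm ℚ a) < (n : ℤ) := by
  classical
  haveI : Fact p.Prime := ⟨hp⟩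
  set R := 𝓞 K
  set I : Ideal R := Ideal.span {(p : R)} with hIdef
  have hpR : (p : R) ≠ 0 := by
    exact_mod_cast Nat.cast_ne_zero.mpr hp.ne_zero
  have hIbot : I ≠ ⊥ := by
    simpa [hIdef, Ideal.span_singleton_eq_bot] using hpR
  -- the norm of `I` is `p ^ n`
  have hkey : (Algebra.norm ℤ ((p : ℕ) : R) : ℚ) = (p : ℚ) ^ n := by
    rw [Algebra.coe_norm_int]
    have h1 : (((p : ℕ) : R) : K) = algebraMap ℚ K ((p : ℕ) : ℚ) := by
      push_cast
      simp
    rw [h1, Algebra.norm_algebraMap, hn]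
  have hnormI : Ideal.absNorm I = p ^ n := by
    have h2 : ((Ideal.absNorm I : ℕ) : ℚ) = (p : ℚ) ^ n := by
      rw [hIdef, Ideal.absNorm_span_singleton, Nat.cast_natAbs, Int.cast_abs, hkey,
        abs_of_nonneg (by positivity)]
    exact_mod_cast h2
  have hn1 : 0 < n := by
    rw [hn]; exact Module.finrank_pos
  have hItop : I ≠ ⊤ := by
    intro h
    have := hnormI
    rw [h, Ideal.absNorm_top] at this
    exact (Nat.one_lt_pow hn1.ne' hp.one_lt).ne' this.symm
  obtain ⟨𝔓, h𝔓max, hI𝔓⟩ := Ideal.exists_le_maximal I hItop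
  have h𝔓prime : 𝔓.IsPrime := h𝔓max.isPrime
  have hp𝔓 : (p : R) ∈ 𝔓 := hI𝔓 (Ideal.subset_span rfl)
  have h𝔓bot : 𝔓 ≠ ⊥ := fun h => hIbot (le_bot_iff.mp (h ▸ hI𝔓))
  have hdvd : Ideal.absNorm 𝔓 ∣ p ^ n := hnormI ▸ Ideal.absNorm_dvd_absNorm_of_le hI𝔓
  obtain ⟨k, hkn, hk⟩ := (Nat.dvd_prime_pow hp).mp hdvd
  have hk1 : 1 ≤ k := by
    rcases Nat.eq_zero_or_pos k with h | h
    · exfalso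
      apply h𝔓max.ne_top
      rw [← Ideal.absNorm_eq_one_iff, hk, h, pow_zero]
    · exact h
  have hkn' : k < n := by
    rcases lt_or_eq_of_le hkn with h | h
    · exact h
    exfalso
    obtain ⟨C, hC⟩ := Ideal.dvd_iff_le.mpr hI𝔓
    have h3 : p ^ n * 1 = p ^ n * Ideal.absNorm C := by
      conv_lhs => rw [mul_one, ← hnormI, hC]
      rw [_root_.map_mul Ideal.absNorm, hk, h]
    have hCtop : Ideal.absNorm C = 1 :=
      (Nat.eq_of_mul_eq_mul_left (pow_pos hp.pos n) h3).symm
    apply hsplit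
    have h4 : I = 𝔓 := by
      rw [hC, Ideal.absNorm_eq_one_iff.mp hCtop, Ideal.mul_top]
    exact h4 ▸ h𝔓prime
  -- pick a uniformizer π ∈ 𝔓 \ 𝔓²
  have hP2lt : 𝔓 ^ 2 < 𝔓 ^ 1 :=
    (Ideal.pow_right_strictAnti 𝔓 h𝔓bot h𝔓max.ne_top) (by norm_num)
  rw [pow_one] at hP2lt
  obtain ⟨π, hπ𝔓, hπ2⟩ := SetLike.exists_of_lt hP2lt
  -- CRT over the primes dividing I
  set s : Finset (Ideal R) := (UniqueFactorizationMonoid.normalizedFactors I).toFinset with hs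
  have hmem : ∀ Q ∈ s, Q.IsPrime ∧ I ≤ Q := fun Q hQ =>
    (Ideal.mem_normalizedFactors_iff hIbot).mp (Multiset.mem_toFinset.mp hQ)
  have h𝔓s : 𝔓 ∈ s :=
    Multiset.mem_toFinset.mpr ((Ideal.mem_normalizedFactors_iff hIbot).mpr ⟨h𝔓prime, hI𝔓⟩)
  obtain ⟨a, ha⟩ := IsDedekindDomain.exists_forall_sub_mem_ideal (s := s)
    (id : Ideal R → Ideal R) (fun Q => if Q = 𝔓 then 2 else 1)
    (fun Q hQ => UniqueFactorizationMonoid.prime_of_normalized_factor Q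
      (Multiset.mem_toFinset.mp hQ))
    (fun i _ j _ hij => hij)
    (fun Q => if (Q : Ideal R) = 𝔓 then π else 1)
  have ha𝔓2 : a - π ∈ 𝔓 ^ 2 := by simpa using ha 𝔓 h𝔓s
  have haP : a ∈ 𝔓 := by
    have : a = (a - π) + π := by ring
    rw [this]
    exact add_mem ((Ideal.pow_le_self two_ne_zero) ha𝔓2) hπ𝔓
  have haP2 : a ∉ 𝔓 ^ 2 := fun h => hπ2 (by simpa using sub_mem h ha𝔓2)
  have haQ : ∀ Q ∈ s, Q ≠ 𝔓 → a ∉ Q := by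
    intro Q hQ hQP haQ'
    have h1Q : a - 1 ∈ Q := by simpa [hQP] using ha Q hQ
    have : (1 : R) ∈ Q := by simpa using sub_mem haQ' h1Q
    exact (hmem Q hQ).1.ne_top (Ideal.eq_top_of_unit_mem Q 1 1 this (mul_one 1))
  -- make it totally positive by adding a big multiple of p²
  obtain ⟨c, hc⟩ := (Set.finite_range (fun φ : K →+* ℝ => -φ ((a : K)))).bddAbove
  obtain ⟨M, hM⟩ := exists_nat_gt (c / ((p : ℝ) ^ 2))
  have hp2pos : (0 : ℝ) < (p : ℝ) ^ 2 := by
    have : (0:ℝ) < (p:ℝ) := by exact_mod_cast hp.pos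
    positivity
  set b : R := a + ((M * p ^ 2 : ℕ) : R) with hbdef
  have htP2 : ((M * p ^ 2 : ℕ) : R) ∈ 𝔓 ^ 2 := by
    push_cast
    erw [Nat.cast_mul, Nat.cast_pow]
    exact Ideal.mul_mem_left _ _ (Ideal.pow_mem_pow hp𝔓 2)
  have htQ : ∀ Q ∈ s, ((M * p ^ 2 : ℕ) : R) ∈ Q := by
    intro Q hQ
    have hpQ : (p : R) ∈ Q := (hmem Q hQ).2 (Ideal.subset_span rfl)
    push_cast
    exact Ideal.mul_mem_left _ _ (by exact Ideal.pow_mem_of_mem Q hpQ 2 (by norm_num))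
  have hbP : b ∈ 𝔓 := add_mem haP ((Ideal.pow_le_self two_ne_zero) htP2)
  have hbP2 : b ∉ 𝔓 ^ 2 := by
    intro h
    exact haP2 (by simpa [hbdef] using sub_mem h htP2)
  have hbQ : ∀ Q ∈ s, Q ≠ 𝔓 → b ∉ Q := by
    intro Q hQ hQP hbQ'
    exact haQ Q hQ hQP (by simpa [hbdef] using sub_mem hbQ' (htQ Q hQ))
  have hbne : b ≠ 0 := fun h => hbP2 (h ▸ zero_mem _)
  -- norm of b
  set J : Ideal R := Ideal.span {b} with hJdef
  have hJbot : J ≠ ⊥ := by simpa [hJdef, Ideal.span_singleton_eq_bot] using hbne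
  have h𝔓J : 𝔓 ∣ J := Ideal.dvd_iff_le.mpr ((Ideal.span_singleton_le_iff_mem _).mpr hbP)
  obtain ⟨C, hC⟩ := h𝔓J
  have hbJ : b ∈ J := Ideal.subset_span rfl
  have hCbot : C ≠ ⊥ := by
    intro h
    rw [h, Ideal.mul_bot] at hC
    exact hJbot hC
  have hJC : J ≤ C := by rw [hC]; exact Ideal.mul_le_right
  -- C is coprime to I
  have hcop : C ⊔ I = ⊤ := by
    by_contra hne
    obtain ⟨Q, hQmax, hQ⟩ := Ideal.exists_le_maximal _ hne
    have hQs : Q ∈ s := Multiset.mem_toFinset.mpr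
      ((Ideal.mem_normalizedFactors_iff hIbot).mpr
        ⟨hQmax.isPrime, le_trans le_sup_right hQ⟩)
    have hCQ : C ≤ Q := le_trans le_sup_left hQ
    have hbQ' : b ∈ Q := hCQ (hJC hbJ)
    by_cases hQP : Q = 𝔓
    · subst hQP
      obtain ⟨D, hD⟩ := Ideal.dvd_iff_le.mpr hCQ
      have : J ≤ Q ^ 2 := by
        rw [hC, hD, ← mul_assoc, ← sq]
        exact Ideal.mul_le_left
      exact hbP2 (this hbJ)
    · exact hbQ Q hQs hQP hbQ'
  have hpC : ¬ p ∣ Ideal.absNorm C := by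
    intro hdvdC
    have hNC : Ideal.absNorm C ≠ 0 := by
      simpa [Ideal.absNorm_eq_zero_iff] using hCbot
    have hfinC : Finite (R ⧸ C) := (Ideal.absNorm_ne_zero_iff C).mp hNC
    letI := Fintype.ofFinite (R ⧸ C)
    have hcard : Ideal.absNorm C = Fintype.card (R ⧸ C) := by
      rw [Ideal.absNorm_apply, Submodule.cardQuot_apply, Nat.card_eq_fintype_card]
    obtain ⟨g, hg⟩ := exists_prime_addOrderOf_dvd_card (G := R ⧸ C) p (by
      rw [← hcard]; exact hdvdC)
    obtain ⟨x, rfl⟩ := Ideal.Quotient.mk_surjective g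
    have hxC : x ∉ C := by
      intro h
      rw [Ideal.Quotient.eq_zero_iff_mem.mpr h, addOrderOf_zero] at hg
      exact hp.one_lt.ne hg
    have hpx : (p : R) * x ∈ C := by
      have h0 : p • (Ideal.Quotient.mk C x) = 0 := hg ▸ addOrderOf_nsmul_eq_zero _
      rw [← map_nsmul, Ideal.Quotient.eq_zero_iff_mem, nsmul_eq_mul] at h0
      exact_mod_cast h0
    obtain ⟨c0, hc0, y, hy, hxy⟩ := Submodule.mem_sup.mp
      (show (1 : R) ∈ C ⊔ I from hcop ▸ Submodule.mem_top)
    obtain ⟨z, hz⟩ := Ideal.mem_span_singleton'.mp hy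
    have hx1 : x = x * c0 + z * ((p : R) * x) := by
      calc x = x * (c0 + y) := by rw [hxy, mul_one]
        _ = x * c0 + z * ((p : R) * x) := by rw [← hz]; ring
    exact hxC (hx1 ▸ add_mem (C.mul_mem_left x hc0) (C.mul_mem_left z hpx))
  have hnormJ : Ideal.absNorm J = p ^ k * Ideal.absNorm C := by
    rw [hC, _root_.map_mul Ideal.absNorm, hk]
  -- final valuation computation
  have hval : padicValRat p (Algebra.norm ℚ ((b : K))) = (k : ℤ) := by
    rw [← Algebra.coe_norm_int, padicValRat.of_int]
    norm_cast
    rw [padicValInt]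
    rw [show (Algebra.norm ℤ b).natAbs = Ideal.absNorm J from
      (Ideal.absNorm_span_singleton b).symm, hnormJ,
      padicValNat.mul (pow_ne_zero k hp.ne_zero) (by
        simpa [Ideal.absNorm_eq_zero_iff] using hCbot),
      padicValNat.prime_pow, padicValNat.eq_zero_of_not_dvd hpC, add_zero]
  refine ⟨(b : K), ?_, ?_, ?_, ?_⟩
  · exact RingOfIntegers.coe_ne_zero_iff.mpr hbne
  · intro φ
    have hb : ((b : K)) = (a : K) + ((M * p ^ 2 : ℕ) : K) := by
      rw [hbdef]; push_cast; ring
    rw [hb, map_add, map_natCast]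
    have h1 : -φ ((a : K)) ≤ c := hc ⟨φ, rfl⟩
    have h2 : c < (M : ℝ) * (p : ℝ) ^ 2 := by
      rwa [div_lt_iff₀ hp2pos] at hM
    push_cast
    nlinarith [h1, h2]
  · rw [hval]; exact_mod_cast hk1
  · rw [hval]; exact_mod_cast hkn'
end

section
/- Let K be a number field of degree n over ℚ and let p be a rational prime. Then pO_K is a prime ideal of O_K if and only if there does not exist a nonzero totally positive element a ∈ K* with 1 ≤ v_p(N_{K/ℚ}(a)) < n. -/
set_option maxHeartbeats 1000000
set_option synthInstance.maxHeartbeats 200000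


open NumberField

section Aux

variable {K : Type*} [Field K] [NumberField K]

/-- If `span {p} ⊔ J = ⊤` then `p` does not divide the absolute norm of `J`. -/
private lemma aux_not_dvd_absNorm {p : ℕ} (hp : p.Prime) {J : Ideal (𝓞 K)} (hJ : J ≠ ⊥)
    (hsup : Ideal.span {(p : 𝓞 K)} ⊔ J = ⊤) : ¬ p ∣ Ideal.absNorm J := by
  haveI : Fact p.Prime := ⟨hp⟩
  intro hdvd
  have h1 : (1 : 𝓞 K) ∈ Ideal.span {(p : 𝓞 K)} ⊔ J := hsup ▸ Submodule.mem_top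
  obtain ⟨y, hy, z, hz, hyz⟩ := Submodule.mem_sup.mp h1
  obtain ⟨c, hc⟩ := Ideal.mem_span_singleton'.mp hy
  have hu : IsUnit ((p : 𝓞 K ⧸ J)) := by
    refine IsUnit.of_mul_eq_one (Ideal.Quotient.mk J c) ?_
    have hz0 : Ideal.Quotient.mk J z = 0 := Ideal.Quotient.eq_zero_iff_mem.mpr hz
    have h2 : Ideal.Quotient.mk J y + Ideal.Quotient.mk J z = 1 := by
      rw [← map_add, hyz, map_one]
    rw [hz0, add_zero] at h2
    calc (p : 𝓞 K ⧸ J) * Ideal.Quotient.mk J c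
        = Ideal.Quotient.mk J ((p : 𝓞 K) * c) := by rw [map_mul, map_natCast]
      _ = Ideal.Quotient.mk J y := by rw [← hc]; ring_nf
      _ = 1 := h2
  have hfin : Finite (𝓞 K ⧸ J) := by
    rw [← Ideal.absNorm_ne_zero_iff]
    simpa [Ideal.absNorm_eq_zero_iff] using hJ
  haveI : Fintype (𝓞 K ⧸ J) := Fintype.ofFinite _
  have hcard : p ∣ Fintype.card (𝓞 K ⧸ J) := by
    rwa [← Nat.card_eq_fintype_card, ← Submodule.cardQuot_apply, ← Ideal.absNorm_apply]
  obtain ⟨g, hg⟩ := exists_prime_addOrderOf_dvd_card p hcard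
  have hg0 : g ≠ 0 := by
    intro h
    rw [h, addOrderOf_zero] at hg
    exact hp.one_lt.ne' hg.symm
  have hpg : (p : 𝓞 K ⧸ J) * g = 0 := by
    rw [← nsmul_eq_mul, ← hg, addOrderOf_nsmul_eq_zero]
  exact hg0 ((hu.mul_right_eq_zero).mp hpg)

private lemma aux_absNorm_span_p (p : ℕ) :
    Ideal.absNorm (Ideal.span {(p : 𝓞 K)}) = p ^ Module.finrank ℚ K := by
  let b := Module.Free.chooseBasis ℤ (𝓞 K)
  rw [Ideal.absNorm_span_singleton, ← map_natCast (algebraMap ℤ (𝓞 K)) p,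
    Algebra.norm_algebraMap_of_basis b, ← Module.finrank_eq_card_chooseBasisIndex,
    RingOfIntegers.rank]
  simp [Int.natAbs_pow]

private lemma aux_padicValRat_norm (p : ℕ) (x : 𝓞 K) :
    padicValRat p (Algebra.norm ℚ (algebraMap (𝓞 K) K x))
      = padicValNat p (Ideal.absNorm (Ideal.span {x})) := by
  rw [show Algebra.norm ℚ (algebraMap (𝓞 K) K x) = ((Algebra.norm ℤ x : ℤ) : ℚ) from
    (Algebra.coe_norm_int x).symm, padicValRat.of_int, Ideal.absNorm_span_singleton]
  rfl

/-- If `span {p}` is prime then `v_p` of the norm of a nonzero integer is a multiple of `n`. -/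
private lemma aux_val_multiple (p : ℕ) (hp : p.Prime)
    (hprime : (Ideal.span {(p : 𝓞 K)}).IsPrime) {x : 𝓞 K} (hx : x ≠ 0) :
    ∃ e : ℕ, padicValNat p (Ideal.absNorm (Ideal.span {x})) = Module.finrank ℚ K * e := by
  haveI : Fact p.Prime := ⟨hp⟩
  set P0 : Ideal (𝓞 K) := Ideal.span {(p : 𝓞 K)} with hP0def
  have hpne : (p : 𝓞 K) ≠ 0 := Nat.cast_ne_zero.mpr hp.ne_zero
  have hbot : P0 ≠ ⊥ := by simp [hP0def, Ideal.span_singleton_eq_bot, hpne]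
  have hPr : Prime P0 := Ideal.prime_of_isPrime hbot hprime
  have hxbot : Ideal.span {x} ≠ (0 : Ideal (𝓞 K)) := by
    simpa [Ideal.zero_eq_bot, Ideal.span_singleton_eq_bot] using hx
  obtain ⟨e, J, hJ, hfac⟩ := WfDvdMonoid.max_power_factor hxbot hPr.irreducible
  refine ⟨e, ?_⟩
  have hJb : J ≠ ⊥ := by
    rintro rfl
    simp only [← Ideal.zero_eq_bot, mul_zero] at hfac
    exact hxbot hfac
  have hmax : P0.IsMaximal := hprime.isMaximal hbot
  have hJle : ¬ J ≤ P0 := fun h => hJ (Ideal.dvd_iff_le.mpr h)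
  have hsup : P0 ⊔ J = ⊤ := by
    rcases (lt_or_eq_of_le (le_sup_left : P0 ≤ P0 ⊔ J)) with h | h
    · exact hmax.1.2 _ h
    · exact absurd (h ▸ le_sup_right : J ≤ P0) hJle
  have hnd : ¬ p ∣ Ideal.absNorm J := aux_not_dvd_absNorm hp hJb hsup
  have hJn : Ideal.absNorm J ≠ 0 := by
    simpa [Ideal.absNorm_eq_zero_iff] using hJb
  rw [hfac, map_mul, map_pow, aux_absNorm_span_p, ← pow_mul,
    padicValNat.mul (pow_ne_zero _ hp.ne_zero) hJn,
    padicValNat.prime_pow, padicValNat.eq_zero_of_not_dvd hnd, add_zero]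

end Aux

/-- A rational prime `p` is non-split in a number field `K` of degree `n`
(i.e. `p 𝓞_K` is a prime ideal) if and only if there is no nonzero totally positive `a ∈ K`
with `1 ≤ v_p(N_{K/ℚ}(a)) < n`. -/
theorem span_isPrime_iff_not_exists_totallyPositive_padicValRat_norm_lt
    (K : Type*) [Field K] [NumberField K] (n : ℕ) (hn : n = Module.finrank ℚ K)
    (p : ℕ) (hp : p.Prime) :
    (Ideal.span {(p : 𝓞 K)}).IsPrime ↔
      ¬ ∃ a : K, a ≠ 0 ∧ (∀ φ : K →+* ℝ, 0 < φ a) ∧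
        1 ≤ padicValRat p (Algebra.norm ℚ a) ∧ padicValRat p (Algebra.norm ℚ a) < (n : ℤ) := by
  haveI : Fact p.Prime := ⟨hp⟩
  have hnpos : 0 < n := hn ▸ Module.finrank_pos
  have hpne : (p : 𝓞 K) ≠ 0 := Nat.cast_ne_zero.mpr hp.ne_zero
  have hbot : (Ideal.span {(p : 𝓞 K)}) ≠ ⊥ := by
    simp [Ideal.span_singleton_eq_bot, hpne]
  constructor
  · -- forward direction
    intro hprime
    rintro ⟨a, ha0, -, h1, h2⟩
    obtain ⟨x, y, hy, hxy⟩ := IsFractionRing.div_surjective (A := 𝓞 K) a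
    have hy0 : y ≠ 0 := nonZeroDivisors.ne_zero hy
    have hyK : algebraMap (𝓞 K) K y ≠ 0 := RingOfIntegers.coe_ne_zero_iff.mpr hy0
    have hamul : a * algebraMap (𝓞 K) K y = algebraMap (𝓞 K) K x := by
      field_simp at hxy
      rw [mul_comm]; exact hxy.symm
    have hx0 : x ≠ 0 := by
      intro h
      rw [h, map_zero] at hamul
      rcases mul_eq_zero.mp hamul with h' | h'
      · exact ha0 h'
      · exact hyK h'
    have hxK : algebraMap (𝓞 K) K x ≠ 0 := RingOfIntegers.coe_ne_zero_iff.mpr hx0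
    have hnx : Algebra.norm ℚ (algebraMap (𝓞 K) K x) ≠ 0 :=
      Algebra.norm_ne_zero_iff.mpr hxK
    have hny : Algebra.norm ℚ (algebraMap (𝓞 K) K y) ≠ 0 :=
      Algebra.norm_ne_zero_iff.mpr hyK
    have hna : Algebra.norm ℚ a ≠ 0 :=
      Algebra.norm_ne_zero_iff.mpr ha0
    have hval : padicValRat p (Algebra.norm ℚ a)
        = padicValRat p (Algebra.norm ℚ (algebraMap (𝓞 K) K x))
          - padicValRat p (Algebra.norm ℚ (algebraMap (𝓞 K) K y)) := by
      have := padicValRat.mul (p := p) hna hny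
      rw [← map_mul, hamul] at this
      omega
    obtain ⟨e₁, he₁⟩ := aux_val_multiple p hp hprime hx0
    obtain ⟨e₂, he₂⟩ := aux_val_multiple p hp hprime hy0
    rw [hval, aux_padicValRat_norm, aux_padicValRat_norm, he₁, he₂, ← hn] at h1 h2
    have h1' : (1 : ℤ) ≤ (n : ℤ) * ((e₁ : ℤ) - (e₂ : ℤ)) := by push_cast at h1 ⊢; linarith
    have h2' : (n : ℤ) * ((e₁ : ℤ) - (e₂ : ℤ)) < (n : ℤ) := by push_cast at h2 ⊢; linarith
    have hne : (1 : ℤ) ≤ (e₁ : ℤ) - (e₂ : ℤ) := by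
      by_contra h
      push_neg at h
      have : (n : ℤ) * ((e₁ : ℤ) - (e₂ : ℤ)) ≤ 0 :=
        mul_nonpos_of_nonneg_of_nonpos (by positivity) (by omega)
      omega
    have : (n : ℤ) * 1 ≤ (n : ℤ) * ((e₁ : ℤ) - (e₂ : ℤ)) :=
      mul_le_mul_of_nonneg_left hne (by positivity)
    omega
  · -- converse direction
    intro hnot
    by_contra hnp
    apply hnot
    classical
    set P0 : Ideal (𝓞 K) := Ideal.span {(p : 𝓞 K)} with hP0def
    have habs0 : Ideal.absNorm P0 = p ^ n := by
      rw [hP0def, aux_absNorm_span_p, hn]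
    have hpn1 : 1 < p ^ n := Nat.one_lt_pow hnpos.ne' hp.one_lt
    have htop : P0 ≠ ⊤ := by
      intro h
      rw [h, Ideal.absNorm_top] at habs0
      omega
    obtain ⟨P, hPirr, hPdvd⟩ := WfDvdMonoid.exists_irreducible_factor
      (by simpa [Ideal.isUnit_iff] using htop) hbot
    have hPpr : Prime P := UniqueFactorizationMonoid.irreducible_iff_prime.mp hPirr
    have hPprime : P.IsPrime := Ideal.isPrime_of_prime hPpr
    have hPbot : P ≠ ⊥ := hPpr.ne_zero
    have hPne : P ≠ P0 := by rintro rfl; exact hnp hPprime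
    have hPle : P0 ≤ P := Ideal.dvd_iff_le.mp hPdvd
    have hPtop : P ≠ ⊤ := hPprime.ne_top
    have hPmax : P.IsMaximal := hPprime.isMaximal hPbot
    -- absNorm P = p ^ f with 1 ≤ f < n
    have hdvd : Ideal.absNorm P ∣ p ^ n := habs0 ▸ Ideal.absNorm_dvd_absNorm_of_le hPle
    obtain ⟨f, hfle, hfval⟩ := (Nat.dvd_prime_pow hp).mp hdvd
    have hf1 : 1 ≤ f := by
      rcases Nat.eq_zero_or_pos f with rfl | h
      · exfalso
        rw [pow_zero] at hfval
        exact hPtop (Ideal.absNorm_eq_one_iff.mp hfval)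
      · exact h
    obtain ⟨C, hC⟩ := hPdvd
    have hCbot : C ≠ ⊥ := by
      rintro rfl
      simp only [← Ideal.zero_eq_bot, mul_zero] at hC
      exact hbot (by rwa [Ideal.zero_eq_bot] at hC)
    have hCtop : C ≠ ⊤ := by
      rintro rfl
      rw [Ideal.mul_top] at hC
      exact hPne hC.symm
    have hCabs : 2 ≤ Ideal.absNorm C := by
      have h0 : Ideal.absNorm C ≠ 0 := by simpa [Ideal.absNorm_eq_zero_iff] using hCbot
      have h1 : Ideal.absNorm C ≠ 1 := fun h => hCtop (Ideal.absNorm_eq_one_iff.mp h)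
      omega
    have hfn : f < n := by
      have : p ^ n = p ^ f * Ideal.absNorm C := by
        rw [← habs0, hC, map_mul, hfval]
      have hlt : p ^ f < p ^ n := by
        have hf0 : 0 < p ^ f := pow_pos hp.pos f
        nlinarith
      exact (Nat.pow_lt_pow_iff_right hp.one_lt).mp hlt
    -- prime avoidance: find a ∈ P, a ∉ P², a ∉ Q for other primes Q above p
    set T : Finset (Ideal (𝓞 K)) :=
      (UniqueFactorizationMonoid.normalizedFactors P0).toFinset.erase P with hTdef
    have hTprime : ∀ Q ∈ T, Prime Q := fun Q hQ =>
      UniqueFactorizationMonoid.prime_of_normalized_factor Q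
        (Multiset.mem_toFinset.mp (Finset.mem_erase.mp hQ).2)
    have havoid : ¬ (P : Set (𝓞 K)) ⊆ ⋃ i ∈ ((insert (P ^ 2) T : Finset (Ideal (𝓞 K))) :
        Set (Ideal (𝓞 K))), (i : Set (𝓞 K)) := by
      rw [Ideal.subset_union_prime (P ^ 2) (P ^ 2) ?_]
      · rintro ⟨i, hi, hle⟩
        rcases Finset.mem_insert.mp hi with rfl | hiT
        · have h2 : P ^ 2 < P := Ideal.pow_lt_self P hPbot hPtop 2 le_rfl
          exact absurd hle (not_le_of_gt h2)
        · have hiP : i ≠ P := (Finset.mem_erase.mp hiT).1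
          have hip : i.IsPrime := Ideal.isPrime_of_prime (hTprime i hiT)
          exact hiP (hPmax.eq_of_le hip.ne_top hle).symm
      · intro i hi hne _
        have hiT : i ∈ T := by
          rcases Finset.mem_insert.mp hi with rfl | h
          · exact absurd rfl hne
          · exact h
        exact Ideal.isPrime_of_prime (hTprime i hiT)
    obtain ⟨a, haP, haU⟩ := Set.not_subset.mp havoid
    have haU' : ∀ i ∈ insert (P ^ 2) T, a ∉ i := by
      intro i hi hmem
      exact haU (Set.mem_biUnion (by exact_mod_cast hi) hmem)
    have ha2 : a ∉ P ^ 2 := haU' _ (Finset.mem_insert_self _ _)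
    have haT : ∀ Q ∈ T, a ∉ Q := fun Q hQ => haU' Q (Finset.mem_insert_of_mem hQ)
    -- choose m large enough for total positivity
    obtain ⟨M, hM⟩ := Finite.exists_le (fun φ : K →+* ℝ => -φ (algebraMap (𝓞 K) K a))
    obtain ⟨m, hm⟩ := exists_nat_ge M
    set c : 𝓞 K := (p : 𝓞 K) ^ 2 * ((m + 1 : ℕ) : 𝓞 K) with hcdef
    set b : 𝓞 K := a + c with hbdef
    have hpP : (p : 𝓞 K) ∈ P := hPle (Ideal.mem_span_singleton_self _)
    have hcP2 : c ∈ P ^ 2 := Ideal.mul_mem_right _ _ (Ideal.pow_mem_pow hpP 2)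
    have hbP : b ∈ P := Ideal.add_mem _ haP (Ideal.pow_le_self two_ne_zero hcP2)
    have hbP2 : b ∉ P ^ 2 := by
      intro h
      have := Ideal.sub_mem _ h hcP2
      simp only [hbdef, add_sub_cancel_right] at this
      exact ha2 this
    have hcQ : ∀ Q ∈ T, c ∈ Q := by
      intro Q hQ
      have hQdvd : Q ∣ P0 := UniqueFactorizationMonoid.dvd_of_mem_normalizedFactors
        (Multiset.mem_toFinset.mp (Finset.mem_erase.mp hQ).2)
      have hpQ : (p : 𝓞 K) ∈ Q := (Ideal.dvd_iff_le.mp hQdvd) (Ideal.mem_span_singleton_self _)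
      rw [hcdef, pow_two, mul_assoc]
      exact Ideal.mul_mem_right _ _ hpQ
    have hbT : ∀ Q ∈ T, b ∉ Q := by
      intro Q hQ h
      have := Ideal.sub_mem _ h (hcQ Q hQ)
      simp only [hbdef, add_sub_cancel_right] at this
      exact haT Q hQ this
    have hb0 : b ≠ 0 := by
      intro h
      exact hbP2 (h ▸ (P ^ 2).zero_mem)
    -- total positivity
    have hpos : ∀ φ : K →+* ℝ, 0 < φ (algebraMap (𝓞 K) K b) := by
      intro φ
      have h1 : φ (algebraMap (𝓞 K) K b)
          = φ (algebraMap (𝓞 K) K a) + (p : ℝ) ^ 2 * ((m : ℝ) + 1) := by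
        rw [hbdef, map_add, map_add, hcdef, map_mul, map_pow]
        push_cast
        simp [map_natCast]
      rw [h1]
      have hM' := hM φ
      have hp1 : (1 : ℝ) ≤ (p : ℝ) ^ 2 := by
        have : (1 : ℝ) ≤ (p : ℝ) := by exact_mod_cast hp.one_lt.le
        nlinarith
      have hmpos : (0 : ℝ) ≤ (m : ℝ) + 1 := by positivity
      nlinarith [hM']
    -- factor span {b}
    have hbspan : Ideal.span {b} ≠ (0 : Ideal (𝓞 K)) := by
      simpa [Ideal.zero_eq_bot, Ideal.span_singleton_eq_bot] using hb0
    obtain ⟨e, J, hJ, hfac⟩ := WfDvdMonoid.max_power_factor hbspan hPirr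
    have hPdvdb : P ∣ Ideal.span {b} := Ideal.dvd_iff_le.mpr
      ((Ideal.span_singleton_le_iff_mem P).mpr hbP)
    have he1 : e = 1 := by
      have hge : 1 ≤ e := by
        by_contra h
        push_neg at h
        interval_cases e
        rw [pow_zero, one_mul] at hfac
        exact hJ (hfac ▸ hPdvdb)
      have hlt : e < 2 := by
        by_contra h
        push_neg at h
        have : P ^ 2 ∣ Ideal.span {b} := dvd_trans (pow_dvd_pow P h) (hfac ▸ Dvd.intro J rfl)
        exact hbP2 ((Ideal.span_singleton_le_iff_mem (P ^ 2)).mp (Ideal.dvd_iff_le.mp this))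
      omega
    rw [he1, pow_one] at hfac
    have hJbot : J ≠ ⊥ := by
      rintro rfl
      simp only [← Ideal.zero_eq_bot, mul_zero] at hfac
      exact hbspan hfac
    -- J is coprime to p
    have hsupJ : P0 ⊔ J = ⊤ := by
      by_contra hne
      obtain ⟨M', hM'max, hM'le⟩ := Ideal.exists_le_maximal _ hne
      have hP0M : P0 ≤ M' := le_trans le_sup_left hM'le
      have hJM : J ≤ M' := le_trans le_sup_right hM'le
      have hM'bot : M' ≠ ⊥ := by
        rintro rfl
        exact hbot (le_bot_iff.mp hP0M)
      have hM'prime : Prime M' := Ideal.prime_of_isPrime hM'bot hM'max.isPrime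
      have hM'mem : M' ∈ (UniqueFactorizationMonoid.normalizedFactors P0).toFinset :=
        Multiset.mem_toFinset.mpr
          ((UniqueFactorizationMonoid.mem_normalizedFactors_iff hbot).mpr
            ⟨hM'prime, Ideal.dvd_iff_le.mpr hP0M⟩)
      rcases eq_or_ne M' P with rfl | hMP
      · exact hJ (Ideal.dvd_iff_le.mpr hJM)
      · have hMT : M' ∈ T := Finset.mem_erase.mpr ⟨hMP, hM'mem⟩
        have hbJ : b ∈ J := by
          have : Ideal.span {b} ≤ J := hfac ▸ Ideal.mul_le_right
          exact (Ideal.span_singleton_le_iff_mem J).mp this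
        exact hbT M' hMT (hJM hbJ)
    have hnd : ¬ p ∣ Ideal.absNorm J := aux_not_dvd_absNorm hp hJbot hsupJ
    have hJn : Ideal.absNorm J ≠ 0 := by simpa [Ideal.absNorm_eq_zero_iff] using hJbot
    have hvalb : padicValNat p (Ideal.absNorm (Ideal.span {b})) = f := by
      rw [hfac, map_mul, hfval,
        padicValNat.mul (pow_ne_zero _ hp.ne_zero) hJn,
        padicValNat.prime_pow, padicValNat.eq_zero_of_not_dvd hnd, add_zero]
    refine ⟨algebraMap (𝓞 K) K b, RingOfIntegers.coe_ne_zero_iff.mpr hb0, hpos, ?_, ?_⟩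
    · rw [aux_padicValRat_norm, hvalb]
      exact_mod_cast hf1
    · rw [aux_padicValRat_norm, hvalb]
      exact_mod_cast hfn
end

section
/- Let (θ_j)_{j ∈ ℕ} be a sequence of real numbers such that the family of real numbers consisting of 1 together with all θ_j (j ∈ ℕ) is linearly independent over ℚ. Then the cyclic subgroup of the topological group ∏_{j ∈ ℕ} ℝ/ℤ (with the product topology) generated by the element whose j-th coordinate is the class of θ_j modulo ℤ is dense in ∏_{j ∈ ℕ} ℝ/ℤ. -/
open MeasureTheory AddCircle Set

local notation "𝕋" => AddCircle (1 : ℝ)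

lemma char_classification (f : 𝕋 → 𝕋) (hc : Continuous f)
    (hadd : ∀ x y, f (x + y) = f x + f y) : ∃ n : ℤ, ∀ x, f x = n • x := by
  haveI : Fact ((0:ℝ) < 1) := ⟨one_pos⟩
  set χ : C(𝕋, ℂ) := ⟨fun x => (toCircle (f x) : ℂ),
    continuous_subtype_val.comp (continuous_toCircle.comp hc)⟩ with hχ
  have hχmul : ∀ x y : 𝕋, χ (x + y) = χ x * χ y := by
    intro x y
    simp only [hχ, ContinuousMap.coe_mk, hadd, toCircle_add, Circle.coe_mul]
  have hχnorm : ∀ x : 𝕋, ‖χ x‖ = 1 := fun x => by exact Circle.norm_coe _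
  -- some Fourier coefficient is nonzero
  have hne : ∃ n : ℤ, fourierCoeff (⇑χ) n ≠ 0 := by
    by_contra h
    push_neg at h
    have hP := tsum_sq_fourierCoeff (ContinuousMap.toLp 2 haarAddCircle ℂ χ)
    have h0 : ∀ n : ℤ, fourierCoeff (ContinuousMap.toLp 2 haarAddCircle ℂ χ) n = 0 := by
      intro n; rw [fourierCoeff_toLp]; exact h n
    simp only [h0, norm_zero] at hP
    rw [zero_pow (by norm_num : (2:ℕ) ≠ 0), tsum_zero] at hP
    have : ∫ t : 𝕋, ‖(ContinuousMap.toLp 2 haarAddCircle ℂ χ) t‖^2 ∂haarAddCircle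
        = ∫ t : 𝕋, (1:ℝ) ∂haarAddCircle := by
      apply integral_congr_ae
      filter_upwards [ContinuousMap.coeFn_toLp (p := 2) (μ := haarAddCircle) (𝕜 := ℂ) χ] with t ht
      rw [ht, hχnorm t, one_pow]
    rw [this] at hP
    simp at hP
  obtain ⟨n, hn⟩ := hne
  have hci : ∀ (g : 𝕋 → ℂ), Continuous g → Integrable g haarAddCircle := by
    intro g hg
    exact hg.integrable_of_hasCompactSupport ((isClosed_tsupport _).isCompact)
  have key : ∀ y : 𝕋, χ y = fourier n y := by
    intro y
    have h1 : fourierCoeff (⇑χ) n * χ y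
        = ∫ t : 𝕋, fourier (-n) t * χ (t + y) ∂haarAddCircle := by
      rw [fourierCoeff, ← integral_mul_const]
      congr 1; ext t
      rw [smul_eq_mul, mul_assoc, ← hχmul]
    have h2 : ∫ t : 𝕋, fourier (-n) t * χ (t + y) ∂haarAddCircle
        = ∫ t : 𝕋, fourier (-n) (t - y) * χ t ∂haarAddCircle := by
      have := integral_add_right_eq_self (μ := haarAddCircle)
        (fun t : 𝕋 => fourier (-n) (t - y) * χ t) y
      rw [← this]
      congr 1; ext t
      rw [add_sub_cancel_right]
    have h3 : ∫ t : 𝕋, fourier (-n) (t - y) * χ t ∂haarAddCircle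
        = fourier n y * fourierCoeff (⇑χ) n := by
      have hsplit : ∀ t : 𝕋, fourier (-n) (t - y) * χ t
          = fourier n y * (fourier (-n) t * χ t) := by
        intro t
        have : fourier (-n) (t - y) = fourier (-n) t * fourier n y := by
          rw [fourier_apply, fourier_apply, fourier_apply, sub_eq_add_neg, zsmul_add,
            toCircle_add, Circle.coe_mul, smul_neg, ← neg_smul, neg_neg]
        rw [this]; ring
      simp_rw [hsplit]
      rw [integral_const_mul, fourierCoeff]
      simp only [smul_eq_mul]
    have := h1.trans (h2.trans h3)
    have h4 : fourierCoeff (⇑χ) n * χ y = fourierCoeff (⇑χ) n * fourier n y := by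
      rw [this]; ring
    exact mul_left_cancel₀ hn h4
  refine ⟨n, fun x => ?_⟩
  have := key x
  simp only [hχ, ContinuousMap.coe_mk, fourier_apply] at this
  exact injective_toCircle one_ne_zero (Subtype.ext this)

lemma closed_subgroup_dichotomy (K : AddSubgroup 𝕋) (hK : IsClosed (K : Set 𝕋)) :
    K = ⊤ ∨ ∃ n : ℤ, n ≠ 0 ∧ ∀ x ∈ K, n • x = 0 := by
  set mkh : ℝ →+ 𝕋 := QuotientAddGroup.mk' (AddSubgroup.zmultiples (1:ℝ)) with hmkh
  have hmk_cont : Continuous mkh := continuous_quotient_mk'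
  have hmk_surj : Function.Surjective mkh := Quotient.mk''_surjective
  set L := K.comap mkh with hL
  have hLc : IsClosed (L : Set ℝ) := hK.preimage hmk_cont
  have h1L : (1 : ℝ) ∈ L := by
    show mkh 1 ∈ K
    have : mkh (1:ℝ) = 0 := coe_period (p := (1:ℝ))
    rw [this]; exact K.zero_mem
  rcases L.dense_or_cyclic with hdense | ⟨a, ha⟩
  · left
    have : (L : Set ℝ) = Set.univ := by
      rw [← hLc.closure_eq]; exact hdense.closure_eq
    have hLtop : L = ⊤ := by
      ext x; simp [← SetLike.mem_coe, this]
    ext x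
    simp only [AddSubgroup.mem_top, iff_true]
    obtain ⟨r, rfl⟩ := hmk_surj x
    have : r ∈ L := by rw [hLtop]; trivial
    exact this
  · right
    rw [ha] at h1L
    rw [AddSubgroup.mem_closure_singleton] at h1L
    obtain ⟨m, hm⟩ := h1L
    have hm0 : m ≠ 0 := by
      rintro rfl; simp at hm
    refine ⟨m, hm0, fun x hx => ?_⟩
    obtain ⟨r, rfl⟩ := hmk_surj x
    have hrL : r ∈ L := hx
    rw [ha, AddSubgroup.mem_closure_singleton] at hrL
    obtain ⟨k, hk⟩ := hrL
    have : m • mkh r = mkh (m • r) := (map_zsmul mkh m r).symm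
    rw [this, ← hk, smul_comm m k a, hm]
    rw [map_zsmul]
    have : mkh (1:ℝ) = 0 := coe_period (p := (1:ℝ))
    rw [this, smul_zero]

lemma kronecker_fin : ∀ (d : ℕ) (θ : Fin d → ℝ),
    LinearIndependent ℚ (fun o : Option (Fin d) => Option.elim o (1:ℝ) θ) →
    Dense ((AddSubgroup.zmultiples (fun j => ((θ j : ℝ) : 𝕋)) : AddSubgroup (Fin d → 𝕋)) :
      Set (Fin d → 𝕋)) := by
  intro d
  induction d with
  | zero =>
      intro θ _ x
      have hx : x = (fun j => ((θ j : ℝ) : 𝕋)) := Subsingleton.elim _ _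
      exact subset_closure ⟨1, by simp [hx]⟩
  | succ d IH =>
      intro θ hindep
      -- the generator
      set g : Fin (d + 1) → 𝕋 := fun j => ((θ j : ℝ) : 𝕋) with hg
      set S := AddSubgroup.zmultiples g with hS
      set H := S.topologicalClosure with hH
      have hgH : g ∈ H := S.le_topologicalClosure (AddSubgroup.mem_zmultiples g)
      have hHcl : IsClosed (H : Set (Fin (d+1) → 𝕋)) := S.isClosed_topologicalClosure
      have hHcomp : IsCompact (H : Set (Fin (d+1) → 𝕋)) := hHcl.isCompact
      -- the tail map
      have htail_cont : Continuous (Fin.tail : (Fin (d+1) → 𝕋) → (Fin d → 𝕋)) :=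
        continuous_pi fun i => continuous_apply _
      have htail_add : ∀ a b : Fin (d+1) → 𝕋, Fin.tail (a + b) = Fin.tail a + Fin.tail b :=
        fun a b => rfl
      -- independence of the tail family
      have hindep' : LinearIndependent ℚ
          (fun o : Option (Fin d) => Option.elim o (1:ℝ) (Fin.tail θ)) := by
        have := hindep.comp (Option.map Fin.succ)
          (Option.map_injective (Fin.succ_injective d))
        convert this using 1
        funext o
        cases o <;> rfl
      have hIH := IH (Fin.tail θ) hindep'
      -- tail is "surjective" from H
      have hsurj : ∀ x : Fin d → 𝕋, ∃ h, h ∈ H ∧ Fin.tail h = x := by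
        intro x
        have himg : IsCompact (Fin.tail '' (H : Set (Fin (d+1) → 𝕋))) :=
          hHcomp.image htail_cont
        have hsub : (AddSubgroup.zmultiples (fun j => ((Fin.tail θ j : ℝ) : 𝕋)) :
            Set (Fin d → 𝕋)) ⊆ Fin.tail '' (H : Set (Fin (d+1) → 𝕋)) := by
          rintro - ⟨n, rfl⟩
          exact ⟨n • g, AddSubgroup.zsmul_mem _ hgH n, by
            funext i; simp [Fin.tail, hg]⟩
        have : (univ : Set (Fin d → 𝕋)) ⊆ Fin.tail '' (H : Set (Fin (d+1) → 𝕋)) := by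
          rw [← hIH.closure_eq]
          exact closure_minimal hsub himg.isClosed
        obtain ⟨h, hh, hxh⟩ := this (mem_univ x)
        exact ⟨h, hh, hxh⟩
      -- cons as additive embedding of the fiber
      have hcons_add : ∀ t s : 𝕋, (Fin.cons (t + s) (0 : Fin d → 𝕋) : Fin (d+1) → 𝕋)
          = Fin.cons t (0 : Fin d → 𝕋) + Fin.cons s (0 : Fin d → 𝕋) := by
        intro t s; funext i
        refine Fin.cases ?_ (fun j => ?_) i <;> simp
      have hcons_cont : Continuous (fun t : 𝕋 => (Fin.cons t (0 : Fin d → 𝕋) : Fin (d+1) → 𝕋)) := by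
        refine continuous_pi fun i => ?_
        refine Fin.cases ?_ (fun j => ?_) i
        · simpa using continuous_id'
        · simpa using continuous_const
      -- the fiber subgroup K
      set K : AddSubgroup 𝕋 :=
        { carrier := {t : 𝕋 | (Fin.cons t (0 : Fin d → 𝕋) : Fin (d+1) → 𝕋) ∈ H}
          zero_mem' := by
            have : (Fin.cons (0:𝕋) (0 : Fin d → 𝕋) : Fin (d+1) → 𝕋) = 0 := by
              funext i; refine Fin.cases ?_ (fun j => ?_) i <;> simp
            simp only [Set.mem_setOf_eq, this]
            exact H.zero_mem
          add_mem' := by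
            intro a b ha hb
            simp only [Set.mem_setOf_eq, hcons_add] at *
            exact H.add_mem ha hb
          neg_mem' := by
            intro a ha
            simp only [Set.mem_setOf_eq] at *
            have : (Fin.cons (-a) (0 : Fin d → 𝕋) : Fin (d+1) → 𝕋) = -(Fin.cons a (0 : Fin d → 𝕋)) := by
              funext i; refine Fin.cases ?_ (fun j => ?_) i <;> simp
            rw [this]
            exact H.neg_mem ha } with hK
      have hKcl : IsClosed (K : Set 𝕋) := hHcl.preimage hcons_cont
      -- key decomposition : if tails agree, difference is a cons
      have hdecomp : ∀ x h : Fin (d+1) → 𝕋, Fin.tail h = Fin.tail x →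
          x = h + Fin.cons ((x - h) 0) (0 : Fin d → 𝕋) := by
        intro x h hth
        funext i
        refine Fin.cases ?_ (fun j => ?_) i
        · simp
        · have : h j.succ = x j.succ := congrFun hth j
          simp [this]
      rcases closed_subgroup_dichotomy K hKcl with hKtop | ⟨n, hn0, hnK⟩
      · -- K = ⊤ : H = everything
        intro x
        obtain ⟨h, hh, hth⟩ := hsurj (Fin.tail x)
        have hxK : (x - h) 0 ∈ K := by rw [hKtop]; trivial
        have : x ∈ H := by
          rw [hdecomp x h hth]
          exact H.add_mem hh hxK
        have hcl : (H : Set (Fin (d+1) → 𝕋)) = closure (S : Set (Fin (d+1) → 𝕋)) := rfl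
        rw [← hcl]
        exact this
      · -- K is killed by n : build a character and contradict independence
        exfalso
        have hwelldef : ∀ h h', h ∈ H → h' ∈ H → Fin.tail h = Fin.tail h' →
            n • h 0 = n • h' 0 := by
          intro h h' hh hh' ht
          have hsub : h - h' ∈ H := H.sub_mem hh hh'
          have : h = h' + Fin.cons ((h - h') 0) (0 : Fin d → 𝕋) := hdecomp h h' ht.symm
          have hK0 : (h - h') 0 ∈ K := by
            show (Fin.cons ((h - h') 0) (0 : Fin d → 𝕋) : Fin (d+1) → 𝕋) ∈ H
            have heq : (Fin.cons ((h - h') 0) (0 : Fin d → 𝕋) : Fin (d+1) → 𝕋) = h - h' := by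
              funext i
              refine Fin.cases ?_ (fun j => ?_) i
              · simp
              · have : h j.succ = h' j.succ := congrFun ht j
                simp [this]
            rw [heq]; exact hsub
          have := hnK _ hK0
          have h2 : n • (h 0 - h' 0) = 0 := by
            simpa using this
          rw [smul_sub, sub_eq_zero] at h2
          exact h2
        -- the lift and the character ψ
        set lift : (Fin d → 𝕋) → (Fin (d+1) → 𝕋) := fun x => (hsurj x).choose with hlift
        have hliftH : ∀ x, lift x ∈ H := fun x => (hsurj x).choose_spec.1
        have hliftT : ∀ x, Fin.tail (lift x) = x := fun x => (hsurj x).choose_spec.2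
        set ψ : (Fin d → 𝕋) → 𝕋 := fun x => n • (lift x 0) with hψ
        have hψspec : ∀ (x) (h), h ∈ H → Fin.tail h = x → ψ x = n • h 0 := by
          intro x h hh ht
          exact hwelldef (lift x) h (hliftH x) hh ((hliftT x).trans ht.symm)
        have hψadd : ∀ x y, ψ (x + y) = ψ x + ψ y := by
          intro x y
          have h1 : ψ (x + y) = n • ((lift x + lift y) 0) :=
            hψspec (x + y) _ (H.add_mem (hliftH x) (hliftH y))
              (by rw [htail_add, hliftT, hliftT])
          rw [h1]
          simp [smul_add, hψ]
        -- continuity of ψ via the quotient map from the compact subtype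
        have hψcont : Continuous ψ := by
          haveI : CompactSpace {x : Fin (d+1) → 𝕋 // x ∈ H} :=
            isCompact_iff_compactSpace.mp hHcomp
          set p : {x : Fin (d+1) → 𝕋 // x ∈ H} → (Fin d → 𝕋) :=
            fun s => Fin.tail s.1 with hp
          have hpcont : Continuous p := htail_cont.comp continuous_subtype_val
          have hpsurj : Function.Surjective p := by
            intro x
            obtain ⟨h, hh, ht⟩ := hsurj x
            exact ⟨⟨h, hh⟩, ht⟩
          have hq : Topology.IsQuotientMap p :=
            (hpcont.isClosedMap).isQuotientMap hpcont hpsurj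
          rw [hq.continuous_iff]
          have : (ψ ∘ p) = fun s : {x : Fin (d+1) → 𝕋 // x ∈ H} => n • (s.1 0) := by
            funext s
            exact hψspec (p s) s.1 s.2 rfl
          rw [this]
          exact ((continuous_apply (0 : Fin (d+1))).comp continuous_subtype_val).zsmul n
        -- ψ is a sum of coordinate characters
        have hψ0 : ψ 0 = 0 := by
          have := hψadd 0 0
          simpa using this.symm
        set Ψ : (Fin d → 𝕋) →+ 𝕋 := AddMonoidHom.mk' ψ hψadd with hΨ
        have hcoord : ∀ i : Fin d, ∃ m : ℤ, ∀ t : 𝕋, ψ (Pi.single i t) = m • t := by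
          intro i
          apply char_classification (fun t => ψ (Pi.single i t))
          · apply hψcont.comp
            refine continuous_pi fun j => ?_
            by_cases hji : j = i
            · subst hji
              simpa [Pi.single_eq_same] using continuous_id'
            · simpa [Pi.single_eq_of_ne hji] using continuous_const
          · intro t s
            rw [Pi.single_add]
            exact hψadd _ _
        choose m hm using hcoord
        have hψsum : ∀ x : Fin d → 𝕋, ψ x = ∑ i, m i • x i := by
          intro x
          have hx : x = ∑ i, Pi.single i (x i) := (Finset.univ_sum_single x).symm
          calc ψ x = Ψ x := rfl
            _ = ∑ i, Ψ (Pi.single i (x i)) := by rw [hx, map_sum]; rw [← hx]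
            _ = ∑ i, m i • x i := by
                refine Finset.sum_congr rfl fun i _ => ?_
                exact hm i (x i)
        -- apply at the generator
        have hgen : ψ (Fin.tail g) = n • g 0 := hψspec _ g hgH rfl
        rw [hψsum] at hgen
        -- translate to a real identity
        have hreal : ∃ z : ℤ, ((∑ i, (m i : ℝ) * θ i.succ) - n * θ 0 : ℝ) = z := by
          set mkh : ℝ →+ 𝕋 := QuotientAddGroup.mk' (AddSubgroup.zmultiples (1:ℝ)) with hmkh
          have hmk : ∀ r : ℝ, mkh r = (r : 𝕋) := fun r => rfl
          have h1 : (((∑ i, (m i : ℝ) * θ i.succ) - n * θ 0 : ℝ) : 𝕋) = 0 := by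
            rw [← hmk, map_sub, map_sum]
            have hL : ∀ i : Fin d, mkh ((m i : ℝ) * θ i.succ) = m i • ((θ i.succ : ℝ) : 𝕋) := by
              intro i
              rw [← zsmul_eq_mul, map_zsmul, hmk]
            have hR : mkh ((n : ℝ) * θ 0) = n • ((θ 0 : ℝ) : 𝕋) := by
              rw [← zsmul_eq_mul, map_zsmul, hmk]
            rw [Finset.sum_congr rfl (fun i _ => hL i), hR, sub_eq_zero]
            exact hgen
          rw [AddCircle.coe_eq_zero_iff] at h1
          obtain ⟨z, hz⟩ := h1
          exact ⟨z, by rw [← hz]; simp⟩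
        obtain ⟨z, hz⟩ := hreal
        -- contradiction with linear independence
        rw [Fintype.linearIndependent_iff] at hindep
        set c : Option (Fin (d+1)) → ℚ :=
          fun o => Option.elim o (-z : ℚ)
            (Fin.cases (-n : ℚ) (fun i => (m i : ℚ))) with hc
        have hsum : ∑ o : Option (Fin (d+1)), c o • (Option.elim o (1:ℝ) θ) = 0 := by
          rw [Fintype.sum_option]
          simp only [hc, Option.elim]
          rw [Fin.sum_univ_succ]
          simp only [Fin.cases_zero, Fin.cases_succ, Rat.smul_def]
          push_cast
          linarith [hz]
        have := hindep c hsum (some 0)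
        simp only [hc, Option.elim, Fin.cases_zero, neg_eq_zero] at this
        exact hn0 (by exact_mod_cast this)

/-- If `(θ_j)_{j ∈ ℕ}` are reals such that `1` together with the `θ_j` are
linearly independent over `ℚ`, then the cyclic subgroup of `∏_{j ∈ ℕ} ℝ/ℤ` generated by
`(θ_j mod ℤ)_j` is dense. -/
theorem dense_zmultiples_of_linearIndependent
    (θ : ℕ → ℝ)
    (hindep : LinearIndependent ℚ (fun o : Option ℕ => Option.elim o (1 : ℝ) θ)) :
    Dense (AddSubgroup.zmultiples
      (fun j => ((θ j : ℝ) : AddCircle (1 : ℝ)) : ℕ → AddCircle (1 : ℝ)) :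
        Set (ℕ → AddCircle (1 : ℝ))) := by
  rw [dense_iff_inter_open]
  rintro U hU ⟨x, hxU⟩
  obtain ⟨I, u, hu, hsub⟩ := isOpen_pi_iff.mp hU x hxU
  set d := I.card with hd
  set e : Fin d → ℕ := fun i => (I.orderIsoOfFin rfl i : ℕ) with he
  have he_inj : Function.Injective e :=
    fun a b hab => (I.orderIsoOfFin rfl).injective (Subtype.ext hab)
  have he_mem : ∀ i, e i ∈ I := fun i => (I.orderIsoOfFin rfl i).2
  have he_surj : ∀ j ∈ I, ∃ i, e i = j := by
    intro j hj
    refine ⟨(I.orderIsoOfFin rfl).symm ⟨j, hj⟩, ?_⟩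
    show ((I.orderIsoOfFin rfl) ((I.orderIsoOfFin rfl).symm ⟨j, hj⟩) : ℕ) = j
    rw [OrderIso.apply_symm_apply]
  have hindep' : LinearIndependent ℚ
      (fun o : Option (Fin d) => Option.elim o (1:ℝ) (θ ∘ e)) := by
    have := hindep.comp (Option.map e) (Option.map_injective he_inj)
    convert this using 1
    funext o; cases o <;> rfl
  have hdense := kronecker_fin d (θ ∘ e) hindep'
  rw [dense_iff_inter_open] at hdense
  set V : Set (Fin d → 𝕋) := Set.pi univ (fun i => u (e i)) with hV
  have hVopen : IsOpen V := isOpen_set_pi finite_univ (fun i _ => (hu (e i) (he_mem i)).1)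
  have hVne : V.Nonempty := ⟨fun i => x (e i), fun i _ => (hu (e i) (he_mem i)).2⟩
  obtain ⟨y, hyV, hyS⟩ := hdense V hVopen hVne
  obtain ⟨k, hky⟩ := hyS
  refine ⟨k • (fun j => ((θ j : ℝ) : 𝕋)), ?_, ⟨k, rfl⟩⟩
  apply hsub
  intro j hj
  obtain ⟨i, rfl⟩ := he_surj j hj
  have := hyV i (mem_univ i)
  rw [← hky] at this
  simpa using this
end

section
/- Let K be a number field with ring of integers O_K, let A_{K,f}^* denote the group of units of the finite adele ring A_{K,f} with its usual idele topology, and let Ô_K^* denote the subgroup of A_{K,f}^* consisting of those ideles u such that the component u_v is a unit of the valuation ring O_v for every finite place v. Then the closure in A_{K,f}^* of the group of totally positive units of O_K equals the intersection of Ô_K^* with the closure in A_{K,f}^* of the group K*_+ of nonzero totally positive elements of K (embedded diagonally). -/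
open IsDedekindDomain IsDedekindDomain.HeightOneSpectrum NumberField

section Aux

variable (R K : Type*) [CommRing R] [IsDedekindDomain R] [Field K] [Algebra R K]
  [IsFractionRing R K]

open scoped nonZeroDivisors

/-- The integral finite adeles, as an additive subgroup. -/
def aux_integralSubgroup : AddSubgroup (FiniteAdeleRing R K) where
  carrier := {x : FiniteAdeleRing R K | ∀ v, x v ∈ adicCompletionIntegers K v}
  add_mem' ha hb v := add_mem (ha v) (hb v)
  zero_mem' v := zero_mem _
  neg_mem' ha v := neg_mem (ha v)

lemma aux_isOpen_integral :
    IsOpen {x : FiniteAdeleRing R K | ∀ v, x v ∈ adicCompletionIntegers K v} := by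
  exact RestrictedProduct.isOpen_forall_mem (fun v => Valued.isOpen_valuationSubring _)

open scoped nonZeroDivisors in
lemma aux_isClosed_integral :
    IsClosed {x : FiniteAdeleRing R K | ∀ v, x v ∈ adicCompletionIntegers K v} := by
  exact AddSubgroup.isClosed_of_isOpen (aux_integralSubgroup R K) (aux_isOpen_integral R K)

end Aux

lemma aux_exists_unit_of_valuation_eq_one {R K : Type*} [CommRing R] [IsDedekindDomain R]
    [Field K] [Algebra R K] [IsFractionRing R K] {k : K} (hk : k ≠ 0)
    (h : ∀ v : HeightOneSpectrum R, v.valuation K k = 1) :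
    ∃ ε : Rˣ, algebraMap R K (ε : R) = k := by
  classical
  obtain ⟨⟨n, d⟩, hnd⟩ := IsLocalization.surj (nonZeroDivisors R) k
  dsimp only at hnd
  have hd0 : (d : R) ≠ 0 := nonZeroDivisors.coe_ne_zero d
  have hdK : algebraMap R K (d : R) ≠ 0 := fun hc => hd0 (IsFractionRing.injective R K (by simp [hc]))
  have hnK : algebraMap R K n ≠ 0 := by
    rw [← hnd]; exact mul_ne_zero hk hdK
  have hn0 : n ≠ 0 := fun hc => hnK (by simp [hc])
  -- equality of int valuations
  have hval : ∀ v : HeightOneSpectrum R, v.intValuationDef n = v.intValuationDef d := by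
    intro v
    have := congrArg (v.valuation K) hnd
    rw [map_mul, h v, one_mul, valuation_of_algebraMap, valuation_of_algebraMap] at this
    exact this.symm
  -- equality of counts
  have hcount : ∀ v : HeightOneSpectrum R,
      (Associates.mk v.asIdeal).count (Associates.mk (Ideal.span {n} : Ideal R)).factors
        = (Associates.mk v.asIdeal).count (Associates.mk (Ideal.span {(d : R)} : Ideal R)).factors := by
    intro v
    have := hval v
    rw [v.intValuationDef_if_neg hn0, v.intValuationDef_if_neg hd0] at this
    have h2 := WithZero.exp_injective this
    exact_mod_cast neg_injective h2
  -- equality of ideals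
  have hspan : (Ideal.span {n} : Ideal R) = Ideal.span {(d : R)} := by
    rw [← associated_iff_eq, ← Associates.mk_eq_mk_iff_associated]
    apply Associates.eq_of_eq_counts
    · exact Associates.mk_ne_zero.mpr (by simpa [Ideal.span_singleton_eq_bot] using hn0)
    · exact Associates.mk_ne_zero.mpr (by simpa [Ideal.span_singleton_eq_bot] using hd0)
    intro p hp
    obtain ⟨J, rfl⟩ := Associates.exists_rep p
    rw [Associates.irreducible_mk] at hp
    exact hcount ⟨J, Ideal.isPrime_of_prime (UniqueFactorizationMonoid.irreducible_iff_prime.mp hp),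
      hp.ne_zero⟩
  obtain ⟨u, hu⟩ := (Ideal.span_singleton_eq_span_singleton.mp hspan)
  -- hu : n * u = d
  have : k * (algebraMap R K n * algebraMap R K (u : R)) = algebraMap R K n := by
    rw [← map_mul, hu, hnd]
  rw [← mul_assoc, mul_comm k, mul_assoc] at this
  have hku : k * algebraMap R K (u : R) = 1 :=
    mul_left_cancel₀ hnK (by rw [this, mul_one])
  refine ⟨u⁻¹, ?_⟩
  have h1 : algebraMap R K ((u⁻¹ : Rˣ) : R) * algebraMap R K (u : R) = 1 := by
    rw [← map_mul, Units.inv_mul, map_one]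
  exact (eq_inv_of_mul_eq_one_left h1).trans (eq_inv_of_mul_eq_one_left hku).symm

lemma aux_diag_apply {R K : Type*} [CommRing R] [IsDedekindDomain R]
    [Field K] [Algebra R K] [IsFractionRing R K] (a : K) (v : HeightOneSpectrum R) :
    (algebraMap K (FiniteAdeleRing R K) a) v = (a : v.adicCompletion K) :=
  rfl

lemma aux_diag_mem_integers_iff {R K : Type*} [CommRing R] [IsDedekindDomain R]
    [Field K] [Algebra R K] [IsFractionRing R K] (a : K) (v : HeightOneSpectrum R) :
    (algebraMap K (FiniteAdeleRing R K) a) v ∈ adicCompletionIntegers K v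
      ↔ v.valuation K a ≤ 1 := by
  rw [aux_diag_apply, mem_adicCompletionIntegers, valuedAdicCompletion_eq_valuation']

theorem closure_totallyPositiveUnits_eq'
    (K : Type*) [Field K] [NumberField K] :
    closure {u : (FiniteAdeleRing (𝓞 K) K)ˣ |
        ∃ ε : (𝓞 K)ˣ, (∀ φ : K →+* ℝ, 0 < φ (algebraMap (𝓞 K) K (ε : 𝓞 K))) ∧
          (u : FiniteAdeleRing (𝓞 K) K) =
            algebraMap K (FiniteAdeleRing (𝓞 K) K) (algebraMap (𝓞 K) K (ε : 𝓞 K))} =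
      {u : (FiniteAdeleRing (𝓞 K) K)ˣ |
          ∀ v : HeightOneSpectrum (𝓞 K),
            (u : FiniteAdeleRing (𝓞 K) K) v ∈ adicCompletionIntegers K v ∧
            ((u⁻¹ : (FiniteAdeleRing (𝓞 K) K)ˣ) : FiniteAdeleRing (𝓞 K) K) v ∈
              adicCompletionIntegers K v} ∩
        closure {u : (FiniteAdeleRing (𝓞 K) K)ˣ |
          ∃ a : K, a ≠ 0 ∧ (∀ φ : K →+* ℝ, 0 < φ a) ∧
            (u : FiniteAdeleRing (𝓞 K) K) = algebraMap K (FiniteAdeleRing (𝓞 K) K) a} := by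
  set R := 𝓞 K
  set A := FiniteAdeleRing R K
  set S : Set A := {x : A | ∀ v, x v ∈ adicCompletionIntegers K v} with hS
  set I : Set Aˣ := {u : Aˣ |
      ∀ v : HeightOneSpectrum R,
        (u : A) v ∈ adicCompletionIntegers K v ∧
        ((u⁻¹ : Aˣ) : A) v ∈ adicCompletionIntegers K v} with hI
  have hIeq : I = (((↑) : Aˣ → A)⁻¹' S) ∩ ((fun u : Aˣ => ((u⁻¹ : Aˣ) : A))⁻¹' S) := by
    ext u
    simp only [hI, hS, Set.mem_setOf_eq, Set.mem_inter_iff, Set.mem_preimage, forall_and]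
  have hIopen : IsOpen I := by
    rw [hIeq]
    exact ((aux_isOpen_integral R K).preimage Units.continuous_val).inter
      ((aux_isOpen_integral R K).preimage Units.continuous_coe_inv)
  have hIclosed : IsClosed I := by
    rw [hIeq]
    exact ((aux_isClosed_integral R K).preimage Units.continuous_val).inter
      ((aux_isClosed_integral R K).preimage Units.continuous_coe_inv)
  -- inverse diagonal computation
  have hinv : ∀ (u : Aˣ) (a : K), a ≠ 0 → (u : A) = algebraMap K A a →
      ((u⁻¹ : Aˣ) : A) = algebraMap K A a⁻¹ := by
    intro u a ha hu
    exact Units.inv_eq_of_mul_eq_one_right (by rw [hu, ← map_mul, mul_inv_cancel₀ ha, map_one])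
  apply subset_antisymm
  · apply Set.subset_inter
    · refine closure_minimal ?_ hIclosed
      rintro u ⟨ε, -, hu⟩
      intro v
      have haK : algebraMap R K (ε : R) ≠ 0 :=
        fun hc => (Units.ne_zero ε) (IsFractionRing.injective R K (by simpa using hc))
      constructor
      · rw [hu, aux_diag_mem_integers_iff]
        exact valuation_le_one (K := K) (v := v) _
      · rw [hinv u _ haK hu]
        have : (algebraMap R K (ε : R))⁻¹ = algebraMap R K ((ε⁻¹ : Rˣ) : R) :=
          (eq_inv_of_mul_eq_one_left (by rw [← map_mul, Units.inv_mul, map_one])).symm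
        rw [this, aux_diag_mem_integers_iff]
        exact valuation_le_one (K := K) (v := v) _
    · apply closure_mono
      rintro u ⟨ε, hpos, hu⟩
      exact ⟨algebraMap R K (ε : R),
        fun hc => (Units.ne_zero ε) (IsFractionRing.injective R K (by simpa using hc)),
        hpos, hu⟩
  · rintro u ⟨huI, huP⟩
    rw [mem_closure_iff] at huP ⊢
    intro o ho hmem
    obtain ⟨p, ⟨hpo, hpI⟩, a, ha0, hapos, hpa⟩ :=
      huP (o ∩ I) (ho.inter hIopen) ⟨hmem, huI⟩
    have hval : ∀ v : HeightOneSpectrum R, v.valuation K a = 1 := by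
      intro v
      obtain ⟨h1, h2⟩ := hpI v
      rw [hpa, aux_diag_mem_integers_iff] at h1
      rw [hinv p a ha0 hpa, aux_diag_mem_integers_iff, map_inv₀] at h2
      have hz : v.valuation K a ≠ 0 := (Valuation.ne_zero_iff _).mpr ha0
      exact le_antisymm h1 ((inv_le_one₀ (zero_lt_iff.mpr hz)).mp h2)
    obtain ⟨ε, hε⟩ := aux_exists_unit_of_valuation_eq_one ha0 hval
    exact ⟨p, hpo, ε, fun φ => by rw [hε]; exact hapos φ, by rw [hpa, hε]⟩


/-- For a number field `K`, the closure, inside the finite idele group of `K`,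
of the group of totally positive units of `𝓞 K` equals the intersection of the subgroup `Ô_K^*`
of integral ideles (those ideles whose component at every finite place is a unit of the local
valuation ring) with the closure of the group `K*₊` of nonzero totally positive elements of `K`
(embedded diagonally). -/
theorem closure_totallyPositiveUnits_eq
    (K : Type*) [Field K] [NumberField K] :
    closure {u : (FiniteAdeleRing (𝓞 K) K)ˣ |
        ∃ ε : (𝓞 K)ˣ, (∀ φ : K →+* ℝ, 0 < φ (algebraMap (𝓞 K) K (ε : 𝓞 K))) ∧
          (u : FiniteAdeleRing (𝓞 K) K) =
            algebraMap K (FiniteAdeleRing (𝓞 K) K) (algebraMap (𝓞 K) K (ε : 𝓞 K))} =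
      {u : (FiniteAdeleRing (𝓞 K) K)ˣ |
          ∀ v : HeightOneSpectrum (𝓞 K),
            (u : FiniteAdeleRing (𝓞 K) K) v ∈ adicCompletionIntegers K v ∧
            ((u⁻¹ : (FiniteAdeleRing (𝓞 K) K)ˣ) : FiniteAdeleRing (𝓞 K) K) v ∈
              adicCompletionIntegers K v} ∩
        closure {u : (FiniteAdeleRing (𝓞 K) K)ˣ |
          ∃ a : K, a ≠ 0 ∧ (∀ φ : K →+* ℝ, 0 < φ a) ∧
            (u : FiniteAdeleRing (𝓞 K) K) = algebraMap K (FiniteAdeleRing (𝓞 K) K) a} := by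
  exact closure_totallyPositiveUnits_eq' K
end
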